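/- arXiv:2408.05322 — 5 statements merged into one kernel-verified Lean document; each statement's English description precedes it below -/
import Mathlib

section
/- (Pushback lemma) Fix $q\in\mathcal{P}_o$, $\alpha\ge 0$, a convex set $A\subseteq\mathcal{P}$, and a convex function $f:A\to\mathbb{R}$. Suppose $p^{opt}$ minimizes $f(p)+\alpha D(p;q)$ over $p\in A$ and $p^{opt}\in\mathcal{P}_o$. Then for all $p\in A$: $f(p^{opt})+\alpha D(p^{opt};q)\le f(p)+\alpha D(p;q)-\alpha D(p;p^{opt})$. -/
open Finset

/-- Pushback lemma for KL-regularized convex minimization over a convex subset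
of the probability simplex. -/
theorem stmt1 (n : ℕ) (q : Fin n → ℝ) (hq : ∀ i, 0 < q i) (hq1 : ∑ i, q i = 1)
    (α : ℝ) (hα : 0 ≤ α) (A : Set (Fin n → ℝ))
    (hA : A ⊆ {p | (∀ i, 0 ≤ p i) ∧ ∑ i, p i = 1}) (hAconv : Convex ℝ A)
    (f : (Fin n → ℝ) → ℝ) (hf : ConvexOn ℝ A f)
    (popt : Fin n → ℝ) (hpoptA : popt ∈ A) (hpopt_pos : ∀ i, 0 < popt i)
    (hmin : ∀ p ∈ A, f popt + α * ∑ i, popt i * Real.log (popt i / q i)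
      ≤ f p + α * ∑ i, p i * Real.log (p i / q i)) :
    ∀ p ∈ A, f popt + α * ∑ i, popt i * Real.log (popt i / q i)
      ≤ f p + α * ∑ i, p i * Real.log (p i / q i)
        - α * ∑ i, p i * Real.log (p i / popt i) := by
  intro p hp
  obtain ⟨hppos, hpsum⟩ := hA hp
  obtain ⟨_, hpoptsum⟩ := hA hpoptA
  set d : Fin n → ℝ := fun i => p i - popt i with hd
  have hdsum : ∑ i, d i = 0 := by
    simp [hd, Finset.sum_sub_distrib, hpsum, hpoptsum]
  set g : ℝ → ℝ := fun t => ∑ i, (popt i + t * d i) * Real.log ((popt i + t * d i) / q i)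
    with hg
  -- derivative of g at 0
  have hderiv : HasDerivAt g (∑ i, d i * (Real.log (popt i / q i) + 1)) 0 := by
    apply HasDerivAt.fun_sum
    intro i _
    have ha : (0:ℝ) < popt i := hpopt_pos i
    have h1 : HasDerivAt (fun t : ℝ => popt i + t * d i) (d i) 0 := by
      simpa using ((hasDerivAt_id (0:ℝ)).mul_const (d i)).const_add (popt i)
    have h2 : HasDerivAt (fun x : ℝ => x * Real.log x) (Real.log (popt i) + 1) (popt i) :=
      Real.hasDerivAt_mul_log (ne_of_gt ha)
    have h2' : HasDerivAt (fun t : ℝ => (popt i + t * d i) * Real.log (popt i + t * d i))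
        ((Real.log (popt i) + 1) * d i) 0 := by
      have h2b : HasDerivAt (fun x : ℝ => x * Real.log x) (Real.log (popt i) + 1)
          ((fun t : ℝ => popt i + t * d i) 0) := by simpa using h2
      exact h2b.comp 0 h1
    have h3 : HasDerivAt (fun t : ℝ => (popt i + t * d i) * Real.log (q i))
        (d i * Real.log (q i)) 0 := h1.mul_const _
    have h4 := h2'.sub h3
    have heq : (fun t : ℝ => (popt i + t * d i) * Real.log ((popt i + t * d i) / q i))
        =ᶠ[nhds (0:ℝ)] fun t =>
          (popt i + t * d i) * Real.log (popt i + t * d i)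
            - (popt i + t * d i) * Real.log (q i) := by
      have hcont : Continuous (fun t : ℝ => popt i + t * d i) := by continuity
      have hpos : ∀ᶠ t in nhds (0:ℝ), 0 < popt i + t * d i := by
        have : Filter.Tendsto (fun t : ℝ => popt i + t * d i) (nhds 0) (nhds (popt i)) := by
          simpa using hcont.tendsto 0
        exact this.eventually (eventually_gt_nhds ha)
      filter_upwards [hpos] with t ht
      rw [Real.log_div (ne_of_gt ht) (ne_of_gt (hq i))]
      ring
    have h5 := h4.congr_of_eventuallyEq heq
    convert h5 using 1
    rw [Real.log_div (ne_of_gt ha) (ne_of_gt (hq i))]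
    ring
  have hc : (∑ i, d i * (Real.log (popt i / q i) + 1))
      = ∑ i, d i * Real.log (popt i / q i) := by
    have : ∑ i, d i * (Real.log (popt i / q i) + 1)
        = ∑ i, d i * Real.log (popt i / q i) + ∑ i, d i := by
      rw [← Finset.sum_add_distrib]; congr 1; funext i; ring
    rw [this, hdsum, add_zero]
  -- key inequality along the segment
  have hkey : ∀ t ∈ Set.Ioc (0:ℝ) 1, f popt - f p ≤ α * slope g 0 t := by
    intro t ht
    obtain ⟨ht0, ht1⟩ := ht
    have hptA : (fun i => popt i + t * d i) ∈ A := by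
      have := hAconv hpoptA hp (by linarith : (0:ℝ) ≤ 1 - t) (le_of_lt ht0) (by ring)
      convert this using 1
      funext i
      simp [hd]
      ring
    have hfconv : f (fun i => popt i + t * d i) ≤ (1 - t) * f popt + t * f p := by
      have := hf.2 hpoptA hp (by linarith : (0:ℝ) ≤ 1 - t) (le_of_lt ht0) (by ring)
      have e : (fun i => popt i + t * d i) = (1 - t) • popt + t • p := by
        funext i
        simp [hd]
        ring
      rw [e]
      simpa [smul_eq_mul] using this
    have hmin' := hmin _ hptA
    have hg0 : g 0 = ∑ i, popt i * Real.log (popt i / q i) := by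
      simp [hg]
    have hgt : g t = ∑ i, (popt i + t * d i) * Real.log ((popt i + t * d i) / q i) := rfl
    have h6 : t * (f popt - f p) ≤ α * (g t - g 0) := by
      rw [hg0] at *
      nlinarith [hmin', hfconv]
    have hslope : slope g 0 t = (g t - g 0) / t := by
      simp [slope_def_field]
    rw [hslope, show α * ((g t - g 0) / t) = (α * (g t - g 0)) / t by ring,
      le_div_iff₀ ht0]
    nlinarith [h6]
  -- take the limit t → 0⁺
  have htend : Filter.Tendsto (fun t => α * slope g 0 t) (nhdsWithin 0 (Set.Ioi 0))
      (nhds (α * ∑ i, d i * Real.log (popt i / q i))) := by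
    have h := hasDerivAt_iff_tendsto_slope.mp hderiv
    rw [hc] at h
    exact Filter.Tendsto.const_mul α
      (h.mono_left (nhdsWithin_mono _ (fun x hx => ne_of_gt hx)))
  have hev : ∀ᶠ t in nhdsWithin (0:ℝ) (Set.Ioi 0), f popt - f p ≤ α * slope g 0 t := by
    filter_upwards [Ioc_mem_nhdsGT_of_mem (by constructor <;> norm_num : (0:ℝ) ∈ Set.Ico 0 1)]
      with t ht using hkey t ht
  have hfinal : f popt - f p ≤ α * ∑ i, d i * Real.log (popt i / q i) :=
    ge_of_tendsto htend hev
  -- algebraic identity to finish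
  have ident : ∑ i, p i * Real.log (p i / q i) - ∑ i, p i * Real.log (p i / popt i)
      = ∑ i, p i * Real.log (popt i / q i) := by
    rw [← Finset.sum_sub_distrib]
    apply Finset.sum_congr rfl
    intro i _
    rcases eq_or_lt_of_le (hppos i) with h0 | h0
    · simp [← h0]
    · rw [Real.log_div (ne_of_gt h0) (ne_of_gt (hq i)),
        Real.log_div (ne_of_gt h0) (ne_of_gt (hpopt_pos i)),
        Real.log_div (ne_of_gt (hpopt_pos i)) (ne_of_gt (hq i))]
      ring
  have hsplit : ∑ i, d i * Real.log (popt i / q i)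
      = ∑ i, p i * Real.log (popt i / q i) - ∑ i, popt i * Real.log (popt i / q i) := by
    rw [← Finset.sum_sub_distrib]
    apply Finset.sum_congr rfl
    intro i _
    simp [hd]; ring
  rw [hsplit] at hfinal
  nlinarith [hfinal, ident]
end

section
/- Suppose $Q_j(0)=0$ and $Q_j(t+1)=Q_j(t)+\pi(t)^\top Y(t-1)y_j$ for $t\ge 0$, where $Y(-1)=0$ and every entry of each matrix $Y(t)$ has absolute value at most $1$, and $\pi(t)\in\mathcal{P}$ for all $t$. Then for every positive integer $T$: $\left|\frac{1}{T}\sum_{t=0}^{T-1}\pi(t)^\top Y(t)y_j\right|\le \left|\frac{Q_j(T+1)}{T}\right|+\frac{1}{T}\sum_{t=1}^{T}\|\pi(t)-\pi(t-1)\|_1$. -/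
open Finset

/-- Virtual queue bound for the global-balance queues `Q_j`. -/
theorem stmt3 (n : ℕ) (j : Fin n) (π : ℕ → Fin n → ℝ)
    (hπ : ∀ t, (∀ i, 0 ≤ π t i) ∧ ∑ i, π t i = 1)
    (Y : ℤ → Matrix (Fin n) (Fin n) ℝ)
    (hYneg : Y (-1) = 0)
    (hYbdd : ∀ t : ℤ, -1 ≤ t → ∀ i i', |Y t i i'| ≤ 1)
    (Q : ℕ → ℝ) (hQ0 : Q 0 = 0)
    (hQ : ∀ t : ℕ, Q (t + 1) = Q t + ∑ i, π t i * Y ((t : ℤ) - 1) i j) :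
    ∀ T : ℕ, 0 < T →
      |(1 / (T : ℝ)) * ∑ t ∈ Finset.range T, ∑ i, π t i * Y (t : ℤ) i j|
        ≤ |Q (T + 1) / (T : ℝ)|
          + (1 / (T : ℝ)) * ∑ t ∈ Finset.Icc 1 T, ∑ i, |π t i - π (t - 1) i| := by
  intro T hT
  have hQsum : ∀ m : ℕ, Q (m + 1) = ∑ t ∈ range (m + 1), ∑ i, π t i * Y ((t : ℤ) - 1) i j := by
    intro m
    induction m with
    | zero => simp [hQ, hQ0]
    | succ m ih => rw [hQ, ih]; exact (Finset.sum_range_succ _ _).symm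
  -- rewrite Q (T+1) as sum over range T of π(t+1)·Y(t)
  have hQsum' : Q (T + 1) = ∑ t ∈ range T, ∑ i, π (t + 1) i * Y (t : ℤ) i j := by
    rw [hQsum T, Finset.sum_range_succ']
    have : ∀ t : ℕ, ((((t : ℕ) + 1 : ℕ) : ℤ) - 1) = (t : ℤ) := by intro t; push_cast; ring
    simp only [this]
    simp [hYneg]
  set S := ∑ t ∈ range T, ∑ i, π t i * Y (t : ℤ) i j with hS
  have hkey : S = Q (T + 1) + ∑ t ∈ range T, ∑ i, (π t i - π (t + 1) i) * Y (t : ℤ) i j := by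
    rw [hQsum']
    rw [← Finset.sum_add_distrib]
    apply Finset.sum_congr rfl
    intro t _
    rw [← Finset.sum_add_distrib]
    apply Finset.sum_congr rfl
    intro i _
    ring
  have hbound : |∑ t ∈ range T, ∑ i, (π t i - π (t + 1) i) * Y (t : ℤ) i j|
      ≤ ∑ t ∈ range T, ∑ i, |π (t + 1) i - π t i| := by
    refine le_trans (Finset.abs_sum_le_sum_abs _ _) ?_
    apply Finset.sum_le_sum
    intro t _
    refine le_trans (Finset.abs_sum_le_sum_abs _ _) ?_
    apply Finset.sum_le_sum
    intro i _
    rw [abs_mul]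
    calc |π t i - π (t + 1) i| * |Y (t : ℤ) i j|
        ≤ |π t i - π (t + 1) i| * 1 := by
          apply mul_le_mul_of_nonneg_left (hYbdd t (by omega) i j) (abs_nonneg _)
      _ = |π (t + 1) i - π t i| := by rw [mul_one, abs_sub_comm]
  have hIccAll : ∀ m : ℕ, ∑ t ∈ Finset.Icc 1 m, ∑ i, |π t i - π (t - 1) i|
      = ∑ t ∈ range m, ∑ i, |π (t + 1) i - π t i| := by
    intro m
    induction m with
    | zero => simp
    | succ m ih =>
      rw [Finset.sum_Icc_succ_top (by omega), ih, Finset.sum_range_succ]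
      simp
  have hIcc := hIccAll T
  have habs : |S| ≤ |Q (T + 1)| + ∑ t ∈ Finset.Icc 1 T, ∑ i, |π t i - π (t - 1) i| := by
    rw [hkey, hIcc]
    exact le_trans (abs_add_le _ _) (by linarith)
  have hTpos : (0 : ℝ) < (T : ℝ) := by exact_mod_cast hT
  have h1T : (0 : ℝ) ≤ 1 / (T : ℝ) := by positivity
  rw [abs_mul, abs_of_nonneg h1T, abs_div, abs_of_nonneg (le_of_lt hTpos)]
  have h := mul_le_mul_of_nonneg_left habs h1T
  rw [mul_add] at h
  have h2 : (1 / (T : ℝ)) * |Q (T + 1)| = |Q (T + 1)| / (T : ℝ) := by ring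
  linarith
end

section
/- Suppose $Z_l(0)=0$ and $Z_l(t+1)=\max[Z_l(t)+\pi(t)^\top G(t-1)g_l,0]$ for $t\ge 0$, where $G(-1)=0$, every entry of each matrix $G(t)$ has absolute value at most $c_{max}$, and $\pi(t)\in\mathcal{P}$ for all $t$. Then for every positive integer $T$: $\frac{1}{T}\sum_{t=0}^{T-1}\pi(t)^\top G(t)g_l \le \frac{Z_l(T+1)}{T}+\frac{c_{max}}{T}\sum_{t=1}^{T}\|\pi(t)-\pi(t-1)\|_1$. -/
open Finset

/-- Virtual queue bound for the cost queues `Z_l`. -/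
theorem stmt4 (n k : ℕ) (l : Fin k) (cmax : ℝ) (hcmax : 0 < cmax)
    (π : ℕ → Fin n → ℝ)
    (hπ : ∀ t, (∀ i, 0 ≤ π t i) ∧ ∑ i, π t i = 1)
    (G : ℤ → Matrix (Fin n) (Fin k) ℝ)
    (hGneg : G (-1) = 0)
    (hGbdd : ∀ t : ℤ, -1 ≤ t → ∀ i l', |G t i l'| ≤ cmax)
    (Z : ℕ → ℝ) (hZ0 : Z 0 = 0)
    (hZ : ∀ t : ℕ, Z (t + 1) = max (Z t + ∑ i, π t i * G ((t : ℤ) - 1) i l) 0) :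
    ∀ T : ℕ, 0 < T →
      (1 / (T : ℝ)) * ∑ t ∈ Finset.range T, ∑ i, π t i * G (t : ℤ) i l
        ≤ Z (T + 1) / (T : ℝ)
          + (cmax / (T : ℝ)) * ∑ t ∈ Finset.Icc 1 T, ∑ i, |π t i - π (t - 1) i| := by
  intro T hT
  set s : ℕ → ℝ := fun t => ∑ i, π t i * G ((t : ℤ) - 1) i l with hs
  -- step: s t ≤ Z (t+1) - Z t
  have hstep : ∀ t : ℕ, Z t + s t ≤ Z (t + 1) := by
    intro t
    rw [hZ t]
    exact le_max_left _ _
  have hsum : ∀ N : ℕ, ∑ t ∈ Finset.range N, s t ≤ Z N := by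
    intro N
    induction N with
    | zero => simp [hZ0]
    | succ N ih =>
        rw [Finset.sum_range_succ]
        calc ∑ t ∈ Finset.range N, s t + s N ≤ Z N + s N := by linarith
          _ ≤ Z (N + 1) := hstep N
  -- shift: sum over range (T+1), drop t=0 term (zero by G(-1)=0)
  have hshift : ∑ t ∈ Finset.range T, s (t + 1) ≤ Z (T + 1) := by
    have h0 : s 0 = 0 := by
      simp [hs, hGneg]
    have := hsum (T + 1)
    rwa [Finset.sum_range_succ', h0, add_zero] at this
  have hs1 : ∀ t : ℕ, s (t + 1) = ∑ i, π (t + 1) i * G (t : ℤ) i l := by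
    intro t
    simp [hs]
  -- pointwise bound
  have hpt : ∀ t : ℕ, ∑ i, π t i * G (t : ℤ) i l
      ≤ s (t + 1) + cmax * ∑ i, |π (t + 1) i - π t i| := by
    intro t
    rw [hs1, Finset.mul_sum, ← Finset.sum_add_distrib]
    apply Finset.sum_le_sum
    intro i _
    have hG := hGbdd (t : ℤ) (by omega) i l
    have h1 : π t i * G (t : ℤ) i l - π (t + 1) i * G (t : ℤ) i l
        = (π t i - π (t + 1) i) * G (t : ℤ) i l := by ring
    have h2 : (π t i - π (t + 1) i) * G (t : ℤ) i l
        ≤ |π (t + 1) i - π t i| * cmax := by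
      calc (π t i - π (t + 1) i) * G (t : ℤ) i l
          ≤ |(π t i - π (t + 1) i) * G (t : ℤ) i l| := le_abs_self _
        _ = |π t i - π (t + 1) i| * |G (t : ℤ) i l| := abs_mul _ _
        _ ≤ |π (t + 1) i - π t i| * cmax := by
            rw [abs_sub_comm]
            exact mul_le_mul_of_nonneg_left hG (abs_nonneg _)
    nlinarith [h2]
  -- sum the pointwise bound
  have hmain : ∑ t ∈ Finset.range T, ∑ i, π t i * G (t : ℤ) i l
      ≤ Z (T + 1) + cmax * ∑ t ∈ Finset.range T, ∑ i, |π (t + 1) i - π t i| := by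
    calc ∑ t ∈ Finset.range T, ∑ i, π t i * G (t : ℤ) i l
        ≤ ∑ t ∈ Finset.range T, (s (t + 1) + cmax * ∑ i, |π (t + 1) i - π t i|) :=
          Finset.sum_le_sum fun t _ => hpt t
      _ = ∑ t ∈ Finset.range T, s (t + 1)
          + cmax * ∑ t ∈ Finset.range T, ∑ i, |π (t + 1) i - π t i| := by
          rw [Finset.sum_add_distrib, Finset.mul_sum]
      _ ≤ _ := by linarith [hshift]
  -- reindex Icc 1 T
  have hIcc : ∑ t ∈ Finset.Icc 1 T, ∑ i, |π t i - π (t - 1) i|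
      = ∑ t ∈ Finset.range T, ∑ i, |π (t + 1) i - π t i| := by
    rw [← Finset.Ico_add_one_right_eq_Icc, Finset.sum_Ico_eq_sum_range]
    simp [add_comm]
  have hTpos : (0 : ℝ) < T := by exact_mod_cast hT
  rw [hIcc]
  have h := mul_le_mul_of_nonneg_left hmain (le_of_lt (one_div_pos.mpr hTpos))
  calc (1 / (T : ℝ)) * ∑ t ∈ Finset.range T, ∑ i, π t i * G (t : ℤ) i l
      ≤ (1 / (T : ℝ)) * (Z (T + 1) + cmax * ∑ t ∈ Finset.range T, ∑ i, |π (t + 1) i - π t i|) := h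
    _ = Z (T + 1) / (T : ℝ)
        + (cmax / (T : ℝ)) * ∑ t ∈ Finset.range T, ∑ i, |π (t + 1) i - π t i| := by
        field_simp
end

section
/- (Representation of a random element, sure version) Let $(\Omega,\mathcal{F},P)$ be a probability space, $X:\Omega\to D_X$ a random element in a standard Borel space $D_X$, $S:\Omega\to D_S$ a random element in an arbitrary measurable space, and $V\sim\mathrm{Unif}[0,1]$ independent of $(X,S)$. Then there exist a measurable function $f:D_S\times[0,1]\to D_X$ and a random variable $U\sim\mathrm{Unif}[0,1]$ independent of $S$ such that $X=f(S,U)$ surely (for every $\omega\in\Omega$, not just almost surely), and $U$ is a measurable function of $(X,S,V)$. -/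
open MeasureTheory ProbabilityTheory

section Stmt15AuxSection

open Set Filter Topology Function
open scoped ENNReal

namespace Stmt15Aux

noncomputable section

/-- Uniform measure on `[0,1]`. -/
def unif : Measure ℝ := volume.restrict (Set.Icc (0:ℝ) 1)

lemma unif_def : unif = volume.restrict (Set.Icc (0:ℝ) 1) := rfl

instance : IsProbabilityMeasure unif :=
  ⟨by rw [unif, Measure.restrict_apply_univ, Real.volume_Icc]; norm_num⟩

lemma unif_apply {s : Set ℝ} (hs : MeasurableSet s) :
    unif s = volume (s ∩ Icc (0:ℝ) 1) := Measure.restrict_apply hs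

lemma unif_Iic_nonpos {t : ℝ} (ht : t ≤ 0) : unif (Iic t) = 0 := by
  rw [unif_apply measurableSet_Iic]
  refine le_antisymm ?_ (zero_le)
  refine le_trans (measure_mono ?_) (le_of_eq (Real.volume_singleton (a := 0)))
  rintro x ⟨hx1, hx2, _⟩
  exact le_antisymm (hx1.trans ht) hx2

lemma unif_Iic_of_mem {t : ℝ} (h0 : 0 ≤ t) (h1 : t ≤ 1) :
    unif (Iic t) = ENNReal.ofReal t := by
  rw [unif_apply measurableSet_Iic]
  have : Iic t ∩ Icc (0:ℝ) 1 = Icc 0 t := by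
    ext x
    simp only [mem_inter_iff, mem_Iic, mem_Icc]
    exact ⟨fun h => ⟨h.2.1, h.1⟩, fun h => ⟨h.2, h.1, h.2.trans h1⟩⟩
  rw [this, Real.volume_Icc, sub_zero]

lemma unif_Iic_of_ge {t : ℝ} (h1 : 1 ≤ t) : unif (Iic t) = 1 := by
  rw [unif_apply measurableSet_Iic]
  have : Iic t ∩ Icc (0:ℝ) 1 = Icc 0 1 := by
    rw [inter_eq_self_of_subset_right]
    exact fun x hx => hx.2.trans h1
  rw [this, Real.volume_Icc]; norm_num

/-- Two finite measures on `ℝ` agreeing on `Iic t` for all `t ≠ 0` are equal. -/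
lemma ext_of_Iic_ne_zero (μ ν : Measure ℝ) [IsFiniteMeasure μ] [IsFiniteMeasure ν]
    (h : ∀ t : ℝ, t ≠ 0 → μ (Iic t) = ν (Iic t)) : μ = ν := by
  refine Measure.ext_of_Iic μ ν fun t => ?_
  rcases ne_or_eq t 0 with ht | rfl
  · exact h t ht
  have hmono : Antitone (fun n : ℕ => Iic ((1:ℝ)/(n+1))) := by
    intro m n hmn
    apply Iic_subset_Iic.mpr
    have hcast : (m:ℝ)+1 ≤ (n:ℝ)+1 := by exact_mod_cast Nat.succ_le_succ hmn
    exact one_div_le_one_div_of_le (by positivity) hcast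
  have hint : ⋂ n : ℕ, Iic ((1:ℝ)/(n+1)) = Iic (0:ℝ) := by
    ext x
    simp only [mem_iInter, mem_Iic]
    constructor
    · intro hx
      by_contra hx0
      push_neg at hx0
      obtain ⟨n, hn⟩ := exists_nat_one_div_lt hx0
      exact absurd (hx n) (by push_neg; exact_mod_cast hn)
    · intro hx n
      exact hx.trans (by positivity)
  have hμ := tendsto_measure_iInter_atTop (μ := μ)
    (fun n => measurableSet_Iic.nullMeasurableSet) hmono ⟨0, measure_ne_top _ _⟩
  have hν := tendsto_measure_iInter_atTop (μ := ν)
    (fun n => measurableSet_Iic.nullMeasurableSet) hmono ⟨0, measure_ne_top _ _⟩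
  rw [hint] at hμ hν
  have heq : (⇑μ ∘ fun n : ℕ => Iic ((1:ℝ)/(n+1))) = (⇑ν ∘ fun n : ℕ => Iic ((1:ℝ)/(n+1))) := by
    funext n
    exact h _ (by positivity)
  rw [heq] at hμ
  exact tendsto_nhds_unique hμ hν

section LeftLim

lemma stieltjes_nonneg {f : StieltjesFunction ℝ} (hbot : Tendsto f atBot (nhds 0)) (x : ℝ) :
    0 ≤ f x :=
  le_of_tendsto hbot (eventually_atBot.mpr ⟨x, fun _ hy => f.mono hy⟩)

lemma stieltjes_le_one {f : StieltjesFunction ℝ} (htop : Tendsto f atTop (nhds 1)) (x : ℝ) :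
    f x ≤ 1 :=
  ge_of_tendsto htop (eventually_atTop.mpr ⟨x, fun _ hy => f.mono hy⟩)

lemma leftLim_mono (f : StieltjesFunction ℝ) : Monotone (leftLim f) := by
  intro a b hab
  rcases eq_or_lt_of_le hab with rfl | h
  · exact le_rfl
  · exact (f.mono.leftLim_le le_rfl).trans (f.mono.le_leftLim h)

lemma leftLim_le_self (f : StieltjesFunction ℝ) (x : ℝ) : leftLim f x ≤ f x :=
  f.mono.leftLim_le le_rfl

lemma leftLim_nonneg {f : StieltjesFunction ℝ} (hbot : Tendsto f atBot (nhds 0)) (x : ℝ) :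
    0 ≤ leftLim f x :=
  (stieltjes_nonneg hbot (x-1)).trans (f.mono.le_leftLim (by linarith))

lemma leftLim_eq_ciSup (f : StieltjesFunction ℝ) (h0 : ∀ x, 0 ≤ f x) (y : ℝ) :
    leftLim f y = ⨆ q : ℚ, if (q:ℝ) < y then f q else 0 := by
  obtain ⟨q0, hq0⟩ := exists_rat_lt y
  have hbdd : BddAbove (range fun q : ℚ => if (q:ℝ) < y then f q else 0) := by
    refine ⟨max (f y) 0, ?_⟩
    rintro x ⟨q, rfl⟩
    dsimp only
    split_ifs with h
    · exact le_max_of_le_left (f.mono h.le)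
    · exact le_max_right _ _
  apply le_antisymm
  · refine le_of_tendsto (f.mono.tendsto_leftLim y) ?_
    filter_upwards [self_mem_nhdsWithin] with z hz
    obtain ⟨q, hq1, hq2⟩ := exists_rat_btwn (show z < y from hz)
    have hle := le_ciSup hbdd q
    rw [if_pos hq2] at hle
    exact (f.mono hq1.le).trans hle
  · refine ciSup_le fun q => ?_
    split_ifs with h
    · exact f.mono.le_leftLim h
    · exact (h0 q0).trans (f.mono.le_leftLim hq0)

end LeftLim

section CondCDF

variable {α : Type*} [MeasurableSpace α] (ρ : Measure (α × ℝ))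

lemma condCDF_eq_ciInf (s : α) (y : ℝ) :
    condCDF ρ s y = ⨅ q : ℚ, if y < (q:ℝ) then condCDF ρ s q else 1 := by
  have hbdd : BddBelow (range fun q : ℚ => if y < (q:ℝ) then condCDF ρ s q else 1) := by
    refine ⟨0, ?_⟩
    rintro x ⟨q, rfl⟩
    dsimp only
    split_ifs
    · exact condCDF_nonneg ρ s q
    · norm_num
  apply le_antisymm
  · refine le_ciInf fun q => ?_
    split_ifs with h
    · exact (condCDF ρ s).mono h.le
    · exact condCDF_le_one ρ s y
  · rw [← StieltjesFunction.iInf_rat_gt_eq (condCDF ρ s) y]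
    obtain ⟨qq, hqq⟩ := exists_rat_gt y
    haveI : Nonempty {r' : ℚ // y < (r':ℝ)} := ⟨⟨qq, hqq⟩⟩
    refine le_ciInf fun r => ?_
    have hle := ciInf_le hbdd (r : ℚ)
    rwa [if_pos r.2] at hle

lemma measurable_condCDF_prod : Measurable fun p : α × ℝ => condCDF ρ p.1 p.2 := by
  have heq : (fun p : α × ℝ => condCDF ρ p.1 p.2)
      = fun p => ⨅ q : ℚ, if p.2 < (q:ℝ) then condCDF ρ p.1 q else 1 :=
    funext fun p => condCDF_eq_ciInf ρ p.1 p.2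
  rw [heq]
  exact Measurable.iInf fun q => Measurable.ite
    (measurableSet_lt measurable_snd measurable_const)
    ((measurable_condCDF ρ q).comp measurable_fst) measurable_const

lemma measurable_leftLim_condCDF :
    Measurable fun p : α × ℝ => leftLim (condCDF ρ p.1) p.2 := by
  have heq : (fun p : α × ℝ => leftLim (condCDF ρ p.1) p.2)
      = fun p => ⨆ q : ℚ, if (q:ℝ) < p.2 then condCDF ρ p.1 q else 0 :=
    funext fun p => leftLim_eq_ciSup _ (condCDF_nonneg ρ p.1) p.2
  rw [heq]
  exact Measurable.iSup fun q => Measurable.ite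
    (measurableSet_lt measurable_const measurable_snd)
    ((measurable_condCDF ρ q).comp measurable_fst) measurable_const

lemma measurable_quantile :
    Measurable fun p : α × ℝ => sInf {y : ℝ | p.2 ≤ condCDF ρ p.1 y} := by
  apply measurable_of_Iio
  intro t
  set J : Set (α × ℝ) := {p | (∀ q : ℚ, condCDF ρ p.1 q < p.2) ∨ (∀ q : ℚ, p.2 ≤ condCDF ρ p.1 q)}
    with hJdef
  have hJm : MeasurableSet J := by
    have h1 : MeasurableSet {p : α × ℝ | ∀ q : ℚ, condCDF ρ p.1 q < p.2} := by
      rw [setOf_forall]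
      exact MeasurableSet.iInter fun q =>
        measurableSet_lt ((measurable_condCDF ρ q).comp measurable_fst) measurable_snd
    have h2 : MeasurableSet {p : α × ℝ | ∀ q : ℚ, p.2 ≤ condCDF ρ p.1 q} := by
      rw [setOf_forall]
      exact MeasurableSet.iInter fun q =>
        measurableSet_le measurable_snd ((measurable_condCDF ρ q).comp measurable_fst)
    exact h1.union h2
  have hquantJ : ∀ p ∈ J, sInf {y : ℝ | p.2 ≤ condCDF ρ p.1 y} = 0 := by
    rintro p (hp | hp)
    · have : {y : ℝ | p.2 ≤ condCDF ρ p.1 y} = ∅ := by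
        rw [eq_empty_iff_forall_notMem]
        intro y hy
        obtain ⟨q, hq⟩ := exists_rat_gt y
        exact absurd (hy.trans ((condCDF ρ p.1).mono hq.le)) (not_le.mpr (hp q))
      rw [this, Real.sInf_empty]
    · apply Real.sInf_of_not_bddBelow
      rintro ⟨b, hb⟩
      obtain ⟨q, hq⟩ := exists_rat_lt b
      exact absurd (hb (hp q)) (not_le.mpr hq)
  have hNE : ∀ p : α × ℝ, p ∉ J → {y : ℝ | p.2 ≤ condCDF ρ p.1 y}.Nonempty ∧
      BddBelow {y : ℝ | p.2 ≤ condCDF ρ p.1 y} := by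
    intro p hp
    rw [hJdef, mem_setOf_eq, not_or] at hp
    obtain ⟨h1, h2⟩ := hp
    push_neg at h1 h2
    obtain ⟨q1, hq1⟩ := h1
    obtain ⟨q2, hq2⟩ := h2
    refine ⟨⟨(q1:ℝ), hq1⟩, ⟨(q2:ℝ), fun y hy => ?_⟩⟩
    by_contra hlt
    push_neg at hlt
    exact absurd (hy.trans ((condCDF ρ p.1).mono hlt.le)) (not_le.mpr hq2)
  have hset : (fun p : α × ℝ => sInf {y : ℝ | p.2 ≤ condCDF ρ p.1 y}) ⁻¹' Iio t =
      (J ∩ {p | (0:ℝ) < t}) ∪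
        ((⋃ q : ℚ, {p : α × ℝ | (q:ℝ) < t ∧ p.2 ≤ condCDF ρ p.1 q}) \ J) := by
    ext p
    simp only [mem_preimage, mem_Iio, mem_union, mem_inter_iff, mem_diff, mem_iUnion,
      mem_setOf_eq]
    constructor
    · intro h
      by_cases hp : p ∈ J
      · exact Or.inl ⟨hp, (hquantJ p hp) ▸ h⟩
      · obtain ⟨hne, hbdd⟩ := hNE p hp
        obtain ⟨y, hy, hyt⟩ := exists_lt_of_csInf_lt hne h
        obtain ⟨q, hq1, hq2⟩ := exists_rat_btwn hyt
        exact Or.inr ⟨⟨q, hq2, hy.trans ((condCDF ρ p.1).mono hq1.le)⟩, hp⟩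
    · rintro (⟨hp, ht⟩ | ⟨⟨q, hqt, hq⟩, hp⟩)
      · rw [hquantJ p hp]; exact ht
      · obtain ⟨_, hbdd⟩ := hNE p hp
        exact lt_of_le_of_lt (csInf_le hbdd hq) hqt
  rw [hset]
  refine MeasurableSet.union (hJm.inter (MeasurableSet.const _)) (MeasurableSet.diff ?_ hJm)
  exact MeasurableSet.iUnion fun q => (MeasurableSet.const _).inter
    (measurableSet_le measurable_snd ((measurable_condCDF ρ q).comp measurable_fst))

end CondCDF

section Transform

variable {f : StieltjesFunction ℝ}

lemma slice_measurable (f : StieltjesFunction ℝ) (t : ℝ) (y : ℝ) :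
    MeasurableSet {v : ℝ | leftLim f y + v * (f y - leftLim f y) ≤ t} :=
  measurableSet_le (measurable_const.add (measurable_id.mul measurable_const)) measurable_const

lemma set_measurable (f : StieltjesFunction ℝ) (t : ℝ) :
    MeasurableSet {p : ℝ × ℝ | leftLim f p.1 + p.2 * (f p.1 - leftLim f p.1) ≤ t} := by
  have hmf : Measurable f := f.mono.measurable
  have hml : Measurable (leftLim f) := (leftLim_mono f).measurable
  exact measurableSet_le ((hml.comp measurable_fst).add
    (measurable_snd.mul ((hmf.comp measurable_fst).sub (hml.comp measurable_fst))))
    measurable_const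

lemma transform_uniform (hbot : Tendsto f atBot (nhds 0)) (htop : Tendsto f atTop (nhds 1))
    {t : ℝ} (ht : t ≠ 0) :
    (f.measure.prod unif) {p : ℝ × ℝ | leftLim f p.1 + p.2 * (f p.1 - leftLim f p.1) ≤ t}
      = unif (Iic t) := by
  haveI hprob : IsProbabilityMeasure f.measure := f.isProbabilityMeasure hbot htop
  rw [Measure.prod_apply (set_measurable f t)]
  set m : ℝ → ℝ≥0∞ := fun y => unif {v : ℝ | leftLim f y + v * (f y - leftLim f y) ≤ t}
    with hm
  have hslice : ∀ y : ℝ,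
      unif (Prod.mk y ⁻¹' {p : ℝ × ℝ | leftLim f p.1 + p.2 * (f p.1 - leftLim f p.1) ≤ t})
        = m y := fun y => rfl
  simp only [hslice]
  rcases lt_or_ge t 0 with ht0 | ht0
  · -- t < 0 : both sides vanish
    have hz : ∀ y : ℝ, m y = 0 := by
      intro y
      rw [hm]
      dsimp only
      rw [unif_apply (slice_measurable f t y)]
      have hempty : {v : ℝ | leftLim f y + v * (f y - leftLim f y) ≤ t} ∩ Icc (0:ℝ) 1 = ∅ := by
        rw [eq_empty_iff_forall_notMem]
        rintro v ⟨hv1, hv2, hv3⟩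
        simp only [mem_setOf_eq] at hv1
        have h1 : 0 ≤ leftLim f y := leftLim_nonneg hbot y
        have h2 : 0 ≤ f y - leftLim f y := sub_nonneg.mpr (leftLim_le_self f y)
        nlinarith
      rw [hempty, measure_empty]
    simp only [hz]
    rw [lintegral_zero, unif_Iic_nonpos ht0.le]
  rcases le_or_gt 1 t with ht1 | ht1
  · -- 1 ≤ t : both sides are 1
    have ho : ∀ y : ℝ, m y = 1 := by
      intro y
      rw [hm]
      dsimp only
      rw [unif_apply (slice_measurable f t y), inter_eq_self_of_subset_right ?_]
      · rw [Real.volume_Icc]; norm_num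
      · rintro v ⟨hv0, hv1⟩
        have h2 : 0 ≤ f y - leftLim f y := sub_nonneg.mpr (leftLim_le_self f y)
        have h3 : f y ≤ 1 := stieltjes_le_one htop y
        simp only [mem_setOf_eq]
        nlinarith
    simp only [ho]
    rw [lintegral_one, measure_univ, unif_Iic_of_ge ht1]
  -- main case 0 < t < 1
  have h0t : 0 < t := lt_of_le_of_ne ht0 (Ne.symm ht)
  set A : Set ℝ := {y | t ≤ f y} with hA
  have hAne : A.Nonempty := by
    have hev : ∀ᶠ y in atTop, t < f y := htop.eventually (eventually_gt_nhds ht1)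
    obtain ⟨y, hy⟩ := hev.exists
    exact ⟨y, hy.le⟩
  have hAbdd : BddBelow A := by
    have hev : ∀ᶠ y in atBot, f y < t := hbot.eventually (eventually_lt_nhds h0t)
    obtain ⟨y0, hy0⟩ := hev.exists
    refine ⟨y0, fun z hz => ?_⟩
    by_contra hlt
    push_neg at hlt
    exact absurd (hz.trans (f.mono hlt.le)) (not_le.mpr hy0)
  set ys : ℝ := sInf A with hys
  have hlt : ∀ y < ys, f y < t := by
    intro y hy
    by_contra hle
    push_neg at hle
    exact absurd (csInf_le hAbdd hle) (not_le.mpr hy)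
  have hllle : leftLim f ys ≤ t := by
    refine le_of_tendsto (f.mono.tendsto_leftLim ys) ?_
    filter_upwards [self_mem_nhdsWithin] with z hz
    exact (hlt z hz).le
  have htle : t ≤ f ys := by
    by_contra h
    push_neg at h
    have hev : ∀ᶠ z in nhdsWithin ys (Ici ys), f z < t :=
      (f.right_continuous ys).eventually (eventually_lt_nhds h)
    obtain ⟨u, hu, hsub⟩ := mem_nhdsGE_iff_exists_Ico_subset.mp hev
    obtain ⟨a, ha, hau⟩ := exists_lt_of_csInf_lt hAne hu
    have hfa : f a < t := hsub ⟨csInf_le hAbdd ha, hau⟩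
    exact absurd (show t ≤ f a from ha) (not_le.mpr hfa)
  have hl0 : 0 ≤ leftLim f ys := leftLim_nonneg hbot ys
  -- part 1 : integral over Iio ys
  have hpart1 : ∫⁻ y in Iio ys, m y ∂f.measure = ENNReal.ofReal (leftLim f ys) := by
    have hval : ∀ y ∈ Iio ys, m y = 1 := by
      intro y hy
      rw [hm]
      dsimp only
      rw [unif_apply (slice_measurable f t y), inter_eq_self_of_subset_right ?_]
      · rw [Real.volume_Icc]; norm_num
      · rintro v ⟨hv0, hv1⟩
        have h2 : 0 ≤ f y - leftLim f y := sub_nonneg.mpr (leftLim_le_self f y)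
        have h3 : f y < t := hlt y hy
        simp only [mem_setOf_eq]
        nlinarith
    rw [setLIntegral_congr_fun measurableSet_Iio hval]
    simp only [lintegral_one, Measure.restrict_apply_univ]
    -- f.measure (Iio ys) = ofReal (leftLim f ys)
    have hIic := f.measure_Iic hbot ys
    have hsing := f.measure_singleton ys
    have hsplit : f.measure (Iio ys) + f.measure {ys} = f.measure (Iic ys) := by
      rw [← measure_union (by simp) (measurableSet_singleton ys), Iio_union_right]
    rw [hIic, hsing, sub_zero] at hsplit
    have hcalc : ENNReal.ofReal (leftLim f ys) + ENNReal.ofReal (f ys - leftLim f ys)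
        = ENNReal.ofReal (f ys) := by
      rw [← ENNReal.ofReal_add hl0 (sub_nonneg.mpr (leftLim_le_self f ys))]
      ring_nf
    rw [← hcalc] at hsplit
    exact WithTop.add_right_cancel (measure_ne_top f.measure {ys}) (by
      rw [hsing]; exact hsplit)
  -- part 2 : integral over the singleton {ys}
  have hpart2 : ∫⁻ y in {ys}, m y ∂f.measure = ENNReal.ofReal (t - leftLim f ys) := by
    rw [lintegral_singleton]
    by_cases hD : leftLim f ys = f ys
    · have hzero : f.measure {ys} = 0 := by
        rw [f.measure_singleton, hD, sub_self, ENNReal.ofReal_zero]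
      have hteq : t = leftLim f ys := by
        rw [hD]
        exact le_antisymm htle (hD ▸ hllle)
      rw [hzero, mul_zero, ← hteq, sub_self, ENNReal.ofReal_zero]
    · have hDpos : 0 < f ys - leftLim f ys :=
        sub_pos.mpr (lt_of_le_of_ne (leftLim_le_self f ys) hD)
    -- identify the slice set with an interval
      have hset : {v : ℝ | leftLim f ys + v * (f ys - leftLim f ys) ≤ t}
          = Iic ((t - leftLim f ys) / (f ys - leftLim f ys)) := by
        ext v
        simp only [mem_setOf_eq, mem_Iic]
        rw [le_div_iff₀ hDpos]
        constructor <;> intro h <;> linarith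
      have hc0 : 0 ≤ (t - leftLim f ys) / (f ys - leftLim f ys) :=
        div_nonneg (by linarith) hDpos.le
      have hc1 : (t - leftLim f ys) / (f ys - leftLim f ys) ≤ 1 := by
        rw [div_le_one hDpos]; linarith
      rw [hm]
      dsimp only
      rw [hset, unif_Iic_of_mem hc0 hc1, f.measure_singleton,
        ← ENNReal.ofReal_mul hc0, div_mul_cancel₀ _ (sub_ne_zero.mpr (Ne.symm hD))]
  -- part 3 : integral over Ioi ys vanishes
  have hpart3 : ∫⁻ y in Ioi ys, m y ∂f.measure = 0 := by
    set E : Set ℝ := {y | f y = t ∧ leftLim f y = f y} with hE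
    have hEm : MeasurableSet E :=
      (measurableSet_eq_fun f.mono.measurable measurable_const).inter
        (measurableSet_eq_fun (leftLim_mono f).measurable f.mono.measurable)
    have hbound : ∀ y ∈ Ioi ys, m y ≤ E.indicator (fun _ => 1) y := by
      intro y hy
      have hlly : t ≤ leftLim f y := by
        obtain ⟨a, ha, hay⟩ := exists_lt_of_csInf_lt hAne hy
        exact (show t ≤ f a from ha).trans (f.mono.le_leftLim hay)
      by_cases hyE : y ∈ E
      · rw [indicator_of_mem hyE]
        exact prob_le_one
      · rw [indicator_of_notMem hyE]
        refine le_of_eq ?_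
        rw [hm]
        dsimp only
        rw [unif_apply (slice_measurable f t y)]
        by_cases hfyt : f y ≤ t
        · exfalso
          have h1 : f y = t := le_antisymm hfyt (hlly.trans (leftLim_le_self f y))
          have h2 : leftLim f y = f y :=
            le_antisymm (leftLim_le_self f y) (h1 ▸ hlly)
          exact hyE ⟨h1, h2⟩
        · push_neg at hfyt
          have hsub : {v : ℝ | leftLim f y + v * (f y - leftLim f y) ≤ t} ∩ Icc (0:ℝ) 1
              ⊆ {0} := by
            rintro v ⟨hv, hv0, hv1⟩
            simp only [mem_setOf_eq] at hv
            have hΔ0 : 0 ≤ f y - leftLim f y := sub_nonneg.mpr (leftLim_le_self f y)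
            have h1 : v * (f y - leftLim f y) = 0 :=
              le_antisymm (by linarith) (mul_nonneg hv0 hΔ0)
            rcases mul_eq_zero.mp h1 with h | h
            · exact h
            · exfalso; have : f y = leftLim f y := by linarith
              linarith
          exact le_antisymm ((measure_mono hsub).trans_eq Real.volume_singleton) (zero_le)
    have hE0 : f.measure (E ∩ Ioi ys) = 0 := by
      set C : Set ℝ := ⋃ r : {r : ℚ // f r = t ∧ ys < (r:ℝ)}, Ioc ys (r:ℝ) with hC
      set T : Set ℝ := {y | y ∈ E ∩ Ioi ys ∧ ∀ z ∈ E ∩ Ioi ys, z ≤ y} with hT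
      have hsub : E ∩ Ioi ys ⊆ C ∪ T := by
        rintro y ⟨⟨hfyt, hlly⟩, hy⟩
        by_cases hmax : ∀ z ∈ E ∩ Ioi ys, z ≤ y
        · exact Or.inr ⟨⟨⟨hfyt, hlly⟩, hy⟩, hmax⟩
        · push_neg at hmax
          obtain ⟨z, hz, hyz⟩ := hmax
          obtain ⟨q, hq1, hq2⟩ := exists_rat_btwn hyz
          have hfq : f q = t := by
            have h1 : f y ≤ f q := f.mono hq1.le
            have h2 : f q ≤ f z := f.mono hq2.le
            rw [hfyt] at h1
            rw [hz.1.1] at h2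
            linarith
          exact Or.inl (mem_iUnion.mpr ⟨⟨q, hfq, lt_trans hy hq1⟩, ⟨hy, hq1.le⟩⟩)
      have h1 : f.measure C = 0 := by
        refine le_antisymm (le_trans (measure_iUnion_le _) ?_) (zero_le)
        have hz : ∀ r : {r : ℚ // f r = t ∧ ys < (r:ℝ)},
            f.measure (Ioc ys (r:ℝ)) = 0 := by
          intro r
          rw [f.measure_Ioc, r.2.1, ENNReal.ofReal_eq_zero]
          linarith
        simp only [hz, tsum_zero, le_refl]
      have h2 : f.measure T = 0 := by
        have hTsub : T.Subsingleton := fun a ha b hb => le_antisymm (hb.2 a ha.1) (ha.2 b hb.1)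
        rcases hTsub.eq_empty_or_singleton with h | ⟨y0, h⟩
        · rw [h, measure_empty]
        · have hy0 : y0 ∈ T := by rw [h]; exact rfl
          obtain ⟨⟨⟨hfy0, hl0'⟩, _⟩, _⟩ := hy0
          rw [h, f.measure_singleton, hl0', sub_self, ENNReal.ofReal_zero]
      refine le_antisymm ?_ (zero_le)
      calc f.measure (E ∩ Ioi ys) ≤ f.measure (C ∪ T) := measure_mono hsub
        _ ≤ f.measure C + f.measure T := measure_union_le _ _
        _ = 0 := by rw [h1, h2, add_zero]
    refine le_antisymm ?_ (zero_le)
    calc ∫⁻ y in Ioi ys, m y ∂f.measure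
        ≤ ∫⁻ y in Ioi ys, E.indicator (fun _ => 1) y ∂f.measure :=
          setLIntegral_mono (measurable_const.indicator hEm) hbound
      _ = f.measure (E ∩ Ioi ys) := by
          rw [lintegral_indicator hEm]
          simp only [lintegral_one, Measure.restrict_restrict hEm,
            Measure.restrict_apply_univ]
      _ = 0 := hE0
  -- assemble
  calc ∫⁻ y, m y ∂f.measure
      = ∫⁻ y in Iio ys, m y ∂f.measure + ∫⁻ y in Ici ys, m y ∂f.measure := by
        rw [show Ici ys = (Iio ys)ᶜ from compl_Iio.symm]
        exact (lintegral_add_compl (fun y => m y) measurableSet_Iio).symm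
    _ = ∫⁻ y in Iio ys, m y ∂f.measure
        + (∫⁻ y in Ioi ys, m y ∂f.measure + ∫⁻ y in {ys}, m y ∂f.measure) := by
        rw [← Ioi_union_left, lintegral_union (measurableSet_singleton ys) (by simp)]
    _ = ENNReal.ofReal (leftLim f ys) + ENNReal.ofReal (t - leftLim f ys) := by
        rw [hpart1, hpart2, hpart3, zero_add]
    _ = ENNReal.ofReal t := by
        rw [← ENNReal.ofReal_add hl0 (by linarith)]
        ring_nf
    _ = unif (Iic t) := (unif_Iic_of_mem h0t.le ht1.le).symm

end Transform

section Recovery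

variable {f : StieltjesFunction ℝ}

/-- Quantile recovery: a.e. with respect to `f.measure ⊗ unif`, applying the generalized
inverse of `f` to the distributional transform recovers the first coordinate. -/
lemma transform_recovery (hbot : Tendsto f atBot (nhds 0)) :
    (f.measure.prod unif) {p : ℝ × ℝ |
      sInf {y : ℝ | leftLim f p.1 + p.2 * (f p.1 - leftLim f p.1) ≤ f y} ≠ p.1} = 0 := by
  set B : Set ℝ := ⋃ q : ℚ, {y : ℝ | (q:ℝ) < y ∧ f y = f q} with hB
  have hBm : MeasurableSet B :=
    MeasurableSet.iUnion fun q => (measurableSet_lt measurable_const measurable_id).inter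
      (measurableSet_eq_fun f.mono.measurable measurable_const)
  -- B is null
  have hBnull : f.measure B = 0 := by
    refine le_antisymm (le_trans (measure_iUnion_le _) ?_) (zero_le)
    have hq : ∀ q : ℚ, f.measure {y : ℝ | (q:ℝ) < y ∧ f y = f q} = 0 := by
      intro q
      set Bq : Set ℝ := {y : ℝ | (q:ℝ) < y ∧ f y = f q} with hBq
      set C : Set ℝ := ⋃ r : {r : ℚ // f r = f q ∧ (q:ℝ) < (r:ℝ)}, Ioc (q:ℝ) (r:ℝ) with hC
      set T : Set ℝ := {y | y ∈ Bq ∧ ∀ z ∈ Bq, z ≤ y} with hT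
      have hsub : Bq ⊆ C ∪ T := by
        rintro y ⟨hqy, hfy⟩
        by_cases hmax : ∀ z ∈ Bq, z ≤ y
        · exact Or.inr ⟨⟨hqy, hfy⟩, hmax⟩
        · push_neg at hmax
          obtain ⟨z, hz, hyz⟩ := hmax
          obtain ⟨r, hr1, hr2⟩ := exists_rat_btwn hyz
          have hfr : f r = f q := by
            have h1 : f y ≤ f r := f.mono hr1.le
            have h2 : f r ≤ f z := f.mono hr2.le
            rw [hfy] at h1
            rw [hz.2] at h2
            linarith
          exact Or.inl (mem_iUnion.mpr ⟨⟨r, hfr, lt_trans hqy hr1⟩, ⟨hqy, hr1.le⟩⟩)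
      have h1 : f.measure C = 0 := by
        refine le_antisymm (le_trans (measure_iUnion_le _) ?_) (zero_le)
        have hz : ∀ r : {r : ℚ // f r = f q ∧ (q:ℝ) < (r:ℝ)},
            f.measure (Ioc (q:ℝ) (r:ℝ)) = 0 := by
          intro r
          rw [f.measure_Ioc, r.2.1, sub_self, ENNReal.ofReal_zero]
        simp only [hz, tsum_zero, le_refl]
      have h2 : f.measure T = 0 := by
        have hTsub : T.Subsingleton := fun a ha b hb => le_antisymm (hb.2 a ha.1) (ha.2 b hb.1)
        rcases hTsub.eq_empty_or_singleton with h | ⟨y0, h⟩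
        · rw [h, measure_empty]
        · have hy0 : y0 ∈ T := by rw [h]; exact rfl
          obtain ⟨⟨hqy0, hfy0⟩, _⟩ := hy0
          obtain ⟨z, hz1, hz2⟩ := exists_between hqy0
          have hfz : f z = f q := by
            have h1 : f q ≤ f z := f.mono hz1.le
            have h2 : f z ≤ f y0 := f.mono hz2.le
            rw [hfy0] at h2
            linarith
          have hll : f y0 ≤ leftLim f y0 := by
            calc f y0 = f z := by rw [hfy0, hfz]
              _ ≤ leftLim f y0 := f.mono.le_leftLim hz2
          rw [h, f.measure_singleton, ENNReal.ofReal_eq_zero]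
          linarith [leftLim_le_self f y0]
      refine le_antisymm ?_ (zero_le)
      calc f.measure Bq ≤ f.measure (C ∪ T) := measure_mono hsub
        _ ≤ f.measure C + f.measure T := measure_union_le _ _
        _ = 0 := by rw [h1, h2, add_zero]
    simp only [hq, tsum_zero, le_refl]
  -- the bad set is contained in a null measurable set
  set M : Set (ℝ × ℝ) := (B ×ˢ (univ : Set ℝ)) ∪ ((univ : Set ℝ) ×ˢ (Ioc (0:ℝ) 1)ᶜ) with hM
  have hMnull : (f.measure.prod unif) M = 0 := by
    refine le_antisymm (le_trans (measure_union_le _ _) ?_) (zero_le)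
    have h1 : (f.measure.prod unif) (B ×ˢ (univ : Set ℝ)) = 0 := by
      rw [Measure.prod_prod, hBnull, zero_mul]
    have h2 : (f.measure.prod unif) ((univ : Set ℝ) ×ˢ (Ioc (0:ℝ) 1)ᶜ) = 0 := by
      rw [Measure.prod_prod]
      have : unif (Ioc (0:ℝ) 1)ᶜ = 0 := by
        rw [unif_apply (measurableSet_Ioc.compl)]
        have hss : (Ioc (0:ℝ) 1)ᶜ ∩ Icc (0:ℝ) 1 ⊆ {0} := by
          rintro v ⟨hv1, hv2, hv3⟩
          simp only [mem_compl_iff, mem_Ioc, not_and, not_le] at hv1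
          simp only [mem_singleton_iff]
          by_contra hne
          exact absurd hv3 (not_le.mpr (hv1 (lt_of_le_of_ne hv2 (Ne.symm hne))))
        exact le_antisymm ((measure_mono hss).trans_eq Real.volume_singleton) (zero_le)
      rw [this, mul_zero]
    rw [h1, h2, add_zero]
  refine measure_mono_null ?_ hMnull
  -- pointwise: outside M the quantile recovers the point
  intro p hp
  simp only [mem_setOf_eq] at hp
  by_contra hpM
  apply hp
  simp only [hM, mem_union, mem_prod, mem_univ, true_and, and_true, not_or, mem_compl_iff,
    not_not] at hpM
  obtain ⟨hpB, hpv⟩ := hpM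
  obtain ⟨hv0, hv1⟩ := hpv
  set y := p.1
  set v := p.2
  set u := leftLim f y + v * (f y - leftLim f y) with hu
  have hΔ0 : 0 ≤ f y - leftLim f y := sub_nonneg.mpr (leftLim_le_self f y)
  have hyA : u ≤ f y := by
    rw [hu]
    nlinarith
  have hlb : ∀ z ∈ {z : ℝ | u ≤ f z}, y ≤ z := by
    intro z hz
    simp only [mem_setOf_eq] at hz
    by_contra hzy
    push_neg at hzy
    have h1 : f z ≤ leftLim f y := f.mono.le_leftLim hzy
    have h2 : leftLim f y ≤ u := by
      rw [hu]
      nlinarith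
    have h3 : f z = leftLim f y := le_antisymm h1 (h2.trans hz)
    have h4 : v * (f y - leftLim f y) = 0 := by
      have := hz.trans h1
      rw [hu] at this
      have h5 : 0 ≤ v * (f y - leftLim f y) := mul_nonneg hv0.le hΔ0
      linarith
    have h6 : f y = leftLim f y := by
      rcases mul_eq_zero.mp h4 with h | h
      · exact absurd h (ne_of_gt hv0)
      · linarith
    -- now f z = leftLim f y = f y with z < y, so y ∈ B, contradiction
    obtain ⟨q, hq1, hq2⟩ := exists_rat_btwn hzy
    have hfq : f q = f y := by
      have ha : f z ≤ f q := f.mono hq1.le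
      have hb : f q ≤ f y := f.mono hq2.le
      rw [h3, ← h6] at ha
      linarith
    have hyB : y ∈ B := by
      rw [hB]
      refine mem_iUnion.mpr ⟨q, ?_⟩
      exact ⟨hq2, hfq.symm⟩
    exact absurd hyB hpB
  exact le_antisymm (csInf_le ⟨y, hlb⟩ hyA) (le_csInf ⟨y, hyA⟩ hlb)

end Recovery

section Disintegration

variable {α : Type*} [MeasurableSpace α]

/-- Disintegration of a finite measure on `α × ℝ` using its conditional CDF. -/
lemma lintegral_condCDF_disint (ρ : Measure (α × ℝ)) [IsFiniteMeasure ρ]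
    {g : α × ℝ → ℝ≥0∞} (hg : Measurable g) :
    ∫⁻ p, g p ∂ρ = ∫⁻ s, ∫⁻ y, g (s, y) ∂(condCDF ρ s).measure ∂ρ.fst := by
  have h := isCondKernelCDF_condCDF ρ
  have h2 := compProd_toKernel h
  calc ∫⁻ p, g p ∂ρ = ∫⁻ p, g p ∂((Kernel.const Unit ρ) ()) := by rw [Kernel.const_apply]
    _ = ∫⁻ p, g p ∂((Kernel.const Unit ρ.fst ⊗ₖ
          IsCondKernelCDF.toKernel (fun p : Unit × α => condCDF ρ p.2) h) ()) := by rw [h2]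
    _ = ∫⁻ s, ∫⁻ y, g (s, y)
          ∂(IsCondKernelCDF.toKernel (fun p : Unit × α => condCDF ρ p.2) h ((), s))
          ∂(Kernel.const Unit ρ.fst ()) :=
        Kernel.lintegral_compProd _ _ _ hg
    _ = ∫⁻ s, ∫⁻ y, g (s, y) ∂(condCDF ρ s).measure ∂ρ.fst := by
        simp only [Kernel.const_apply, IsCondKernelCDF.toKernel_apply]

end Disintegration

end

end Stmt15Aux

end Stmt15AuxSection

open Stmt15Aux

/-- Sure representation of a random element taking values in a standard Borel
space: `X = f(S, U)` for every outcome, with `U` uniform on `[0,1]`, independent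
of `S`, and measurable in `(X, S, V)`. -/
theorem stmt15 {Ω DX DS : Type*} [MeasurableSpace Ω]
    [MeasurableSpace DX] [StandardBorelSpace DX] [MeasurableSpace DS]
    (P : Measure Ω) [IsProbabilityMeasure P]
    (X : Ω → DX) (hX : Measurable X) (S : Ω → DS) (hS : Measurable S)
    (V : Ω → ℝ) (hV : Measurable V)
    (hVunif : Measure.map V P = volume.restrict (Set.Icc (0 : ℝ) 1))
    (hindep : IndepFun (fun ω => (X ω, S ω)) V P) :
    ∃ (f : DS × ℝ → DX) (U : Ω → ℝ) (h : DX × DS × ℝ → ℝ),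
      Measurable f ∧ Measurable h ∧
      Measure.map U P = volume.restrict (Set.Icc (0 : ℝ) 1) ∧
      IndepFun U S P ∧
      (∀ ω, X ω = f (S ω, U ω)) ∧
      (∀ ω, U ω = h (X ω, S ω, V ω)) := by
  classical
  -- nonemptiness
  have hΩne : Nonempty Ω := by
    by_contra h
    rw [not_nonempty_iff] at h
    have : P Set.univ = 0 := by simp [Set.univ_eq_empty_iff.mpr h]
    rw [measure_univ] at this
    exact one_ne_zero this
  have hDXne : Nonempty DX := ⟨X hΩne.some⟩
  -- embed DX into ℝ
  obtain ⟨φ, hφ⟩ := exists_measurableEmbedding_real DX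
  -- measurable retraction of φ
  let r : ℝ → DX := fun z =>
    if h : z ∈ Set.range φ then Set.rangeSplitting φ ⟨z, h⟩ else hDXne.some
  have hr : Measurable r := by
    refine Measurable.dite ?_ measurable_const hφ.measurableSet_range
    exact hφ.measurable_rangeSplitting
  have hrφ : ∀ x, r (φ x) = x := by
    intro x
    have hmem : φ x ∈ Set.range φ := Set.mem_range_self x
    have : r (φ x) = Set.rangeSplitting φ ⟨φ x, hmem⟩ := dif_pos hmem
    rw [this]
    apply hφ.injective
    rw [Set.apply_rangeSplitting φ ⟨φ x, hmem⟩]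
  -- real-valued version of X
  set Y : Ω → ℝ := fun ω => φ (X ω) with hYdef
  have hY : Measurable Y := hφ.measurable.comp hX
  have hSY : Measurable fun ω => (S ω, Y ω) := hS.prodMk hY
  set ρ : Measure (DS × ℝ) := Measure.map (fun ω => (S ω, Y ω)) P with hρdef
  haveI : IsProbabilityMeasure ρ := Measure.isProbabilityMeasure_map hSY.aemeasurable
  have hfst : ρ.fst = Measure.map S P := by
    rw [hρdef, Measure.fst, Measure.map_map measurable_fst hSY]
    rfl
  haveI : IsProbabilityMeasure (Measure.map S P) := Measure.isProbabilityMeasure_map hS.aemeasurable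
  haveI : IsProbabilityMeasure ρ.fst := by rw [hfst]; infer_instance
  -- conditional CDF and its left limits
  set F : DS × ℝ → ℝ := fun p => condCDF ρ p.1 p.2 with hFdef
  set L : DS × ℝ → ℝ := fun p => Function.leftLim (condCDF ρ p.1) p.2 with hLdef
  have hFm : Measurable F := measurable_condCDF_prod ρ
  have hLm : Measurable L := measurable_leftLim_condCDF ρ
  -- the distributional transform
  set U₀ : Ω → ℝ := fun ω =>
    L (S ω, Y ω) + V ω * (F (S ω, Y ω) - L (S ω, Y ω)) with hU₀def
  have hLSY : Measurable fun ω => L (S ω, Y ω) := hLm.comp hSY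
  have hFSY : Measurable fun ω => F (S ω, Y ω) := hFm.comp hSY
  have hU₀ : Measurable U₀ := hLSY.add (hV.mul (hFSY.sub hLSY))
  -- joint law of ((S, Y), V)
  have hiSYV : IndepFun (fun ω => (S ω, Y ω)) V P := by
    have hcomp := hindep.comp (φ := fun p : DX × DS => (p.2, φ p.1)) (ψ := id)
      (measurable_snd.prodMk (hφ.measurable.comp measurable_fst)) measurable_id
    exact hcomp
  have hlaw : Measure.map (fun ω => ((S ω, Y ω), V ω)) P = ρ.prod unif := by
    rw [(indepFun_iff_map_prod_eq_prod_map_map hSY.aemeasurable hV.aemeasurable).mp hiSYV,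
      hVunif]
    rfl
  -- the main computation
  have hmain : ∀ t : ℝ, t ≠ 0 → ∀ A : Set DS, MeasurableSet A →
      P ({ω | U₀ ω ≤ t} ∩ S ⁻¹' A) = unif (Set.Iic t) * ρ.fst A := by
    intro t ht A hA
    set E : Set ((DS × ℝ) × ℝ) :=
      {q | q.1.1 ∈ A ∧ L q.1 + q.2 * (F q.1 - L q.1) ≤ t} with hEdef
    have hEm : MeasurableSet E := by
      refine MeasurableSet.inter ?_ ?_
      · exact (measurable_fst.comp measurable_fst) hA
      · exact measurableSet_le ((hLm.comp measurable_fst).add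
          (measurable_snd.mul ((hFm.comp measurable_fst).sub (hLm.comp measurable_fst))))
          measurable_const
    have hpre : (fun ω => ((S ω, Y ω), V ω)) ⁻¹' E = {ω | U₀ ω ≤ t} ∩ S ⁻¹' A := by
      ext ω
      simp only [Set.mem_preimage, hEdef, Set.mem_setOf_eq, Set.mem_inter_iff, hU₀def]
      tauto
    calc P ({ω | U₀ ω ≤ t} ∩ S ⁻¹' A)
        = Measure.map (fun ω => ((S ω, Y ω), V ω)) P E := by
          rw [Measure.map_apply (hSY.prodMk hV) hEm, hpre]
      _ = (ρ.prod unif) E := by rw [hlaw]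
      _ = ∫⁻ p, unif (Prod.mk p ⁻¹' E) ∂ρ := Measure.prod_apply hEm
      _ = ∫⁻ s, ∫⁻ y, unif (Prod.mk (s, y) ⁻¹' E) ∂(condCDF ρ s).measure ∂ρ.fst :=
          lintegral_condCDF_disint ρ (measurable_measure_prodMk_left hEm)
      _ = ∫⁻ s, A.indicator (fun _ => unif (Set.Iic t)) s ∂ρ.fst := by
          refine lintegral_congr fun s => ?_
          by_cases hs : s ∈ A
          · rw [Set.indicator_of_mem hs]
            have hsl : ∀ y : ℝ, Prod.mk (s, y) ⁻¹' E =
                {v : ℝ | Function.leftLim (condCDF ρ s) y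
                  + v * (condCDF ρ s y - Function.leftLim (condCDF ρ s) y) ≤ t} := by
              intro y
              ext v
              simp only [Set.mem_preimage, hEdef, Set.mem_setOf_eq, hs, true_and, hLdef, hFdef]
            calc ∫⁻ y, unif (Prod.mk (s, y) ⁻¹' E) ∂(condCDF ρ s).measure
                = ((condCDF ρ s).measure.prod unif) {p : ℝ × ℝ |
                    Function.leftLim (condCDF ρ s) p.1
                      + p.2 * (condCDF ρ s p.1 - Function.leftLim (condCDF ρ s) p.1) ≤ t} := by
                  rw [Measure.prod_apply (set_measurable (condCDF ρ s) t)]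
                  exact lintegral_congr fun y => by rw [hsl y]; rfl
              _ = unif (Set.Iic t) :=
                  transform_uniform (tendsto_condCDF_atBot ρ s) (tendsto_condCDF_atTop ρ s) ht
          · rw [Set.indicator_of_notMem hs]
            have hsl : ∀ y : ℝ, Prod.mk (s, y) ⁻¹' E = (∅ : Set ℝ) := by
              intro y
              ext v
              simp only [Set.mem_preimage, hEdef, Set.mem_setOf_eq, hs, false_and,
                Set.mem_empty_iff_false]
            simp only [hsl, measure_empty, lintegral_zero]
      _ = unif (Set.Iic t) * ρ.fst A := by
          rw [lintegral_indicator hA, setLIntegral_const]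
  -- law of U₀
  haveI : IsFiniteMeasure (Measure.map U₀ P) :=
    ⟨by rw [Measure.map_apply hU₀ MeasurableSet.univ]; exact measure_lt_top _ _⟩
  have hU₀law : Measure.map U₀ P = unif := by
    refine ext_of_Iic_ne_zero _ _ fun t ht => ?_
    rw [Measure.map_apply hU₀ measurableSet_Iic]
    have h := hmain t ht Set.univ MeasurableSet.univ
    simp [measure_univ] at h
    exact h
  -- joint law of (U₀, S)
  have hjoint : Measure.map (fun ω => (U₀ ω, S ω)) P = unif.prod (Measure.map S P) := by
    refine Eq.symm (Measure.prod_eq fun B A hB hA => ?_)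
    have hm1 : Measure.map U₀ (P.restrict (S ⁻¹' A)) = (Measure.map S P) A • unif := by
      haveI : IsFiniteMeasure (Measure.map U₀ (P.restrict (S ⁻¹' A))) :=
        ⟨by rw [Measure.map_apply hU₀ MeasurableSet.univ]; exact measure_lt_top _ _⟩
      haveI : IsFiniteMeasure ((Measure.map S P) A • unif) := by
        refine ⟨?_⟩
        rw [Measure.smul_apply, smul_eq_mul]
        exact ENNReal.mul_lt_top (measure_lt_top _ _) (measure_lt_top _ _)
      refine ext_of_Iic_ne_zero _ _ fun t ht => ?_
      rw [Measure.map_apply hU₀ measurableSet_Iic,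
        Measure.restrict_apply (hU₀ measurableSet_Iic)]
      have h := hmain t ht A hA
      rw [Measure.smul_apply, smul_eq_mul, ← hfst, mul_comm]
      exact h
    rw [Measure.map_apply (hU₀.prodMk hS) (hB.prod hA)]
    have hpre : (fun ω => (U₀ ω, S ω)) ⁻¹' (B ×ˢ A) = U₀ ⁻¹' B ∩ S ⁻¹' A := by
      ext ω; simp [Set.mem_prod]
    rw [hpre, ← Measure.restrict_apply (hU₀ hB), ← Measure.map_apply hU₀ hB, hm1,
      Measure.smul_apply, smul_eq_mul, mul_comm]
  have hindepU₀S : IndepFun U₀ S P :=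
    (indepFun_iff_map_prod_eq_prod_map_map hU₀.aemeasurable hS.aemeasurable).mpr
      (by rw [hjoint, hU₀law])
  -- the quantile function
  set g₀ : DS × ℝ → ℝ := fun p => sInf {y : ℝ | p.2 ≤ condCDF ρ p.1 y} with hg₀def
  have hg₀ : Measurable g₀ := measurable_quantile ρ
  -- a.e. recovery
  have hrec : ∀ᵐ ω ∂P, g₀ (S ω, U₀ ω) = Y ω := by
    rw [ae_iff]
    set D : Set ((DS × ℝ) × ℝ) :=
      {q | sInf {y : ℝ | L q.1 + q.2 * (F q.1 - L q.1) ≤ condCDF ρ q.1.1 y} ≠ q.1.2}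
      with hDdef
    have hGm : Measurable fun q : (DS × ℝ) × ℝ => L q.1 + q.2 * (F q.1 - L q.1) :=
      (hLm.comp measurable_fst).add
        (measurable_snd.mul ((hFm.comp measurable_fst).sub (hLm.comp measurable_fst)))
    have hDm : MeasurableSet D := by
      have hq : Measurable fun q : (DS × ℝ) × ℝ =>
          g₀ (q.1.1, L q.1 + q.2 * (F q.1 - L q.1)) :=
        hg₀.comp ((measurable_fst.comp measurable_fst).prodMk hGm)
      exact (measurableSet_eq_fun hq (measurable_snd.comp measurable_fst)).compl
    have hpre : {ω | ¬ g₀ (S ω, U₀ ω) = Y ω} = (fun ω => ((S ω, Y ω), V ω)) ⁻¹' D := by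
      ext ω
      simp only [Set.mem_setOf_eq, Set.mem_preimage, hDdef, hg₀def, hU₀def]
    rw [hpre, Measure.map_apply (hSY.prodMk hV) hDm |>.symm, hlaw,
      Measure.prod_apply hDm,
      lintegral_condCDF_disint ρ (measurable_measure_prodMk_left hDm)]
    have hz : ∀ s, ∫⁻ y, unif (Prod.mk (s, y) ⁻¹' D) ∂(condCDF ρ s).measure = 0 := by
      intro s
      have hsl : ∀ y : ℝ, Prod.mk (s, y) ⁻¹' D = {v : ℝ |
          sInf {z : ℝ | Function.leftLim (condCDF ρ s) y
            + v * (condCDF ρ s y - Function.leftLim (condCDF ρ s) y) ≤ condCDF ρ s z}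
            ≠ y} := by
        intro y
        ext v
        simp only [Set.mem_preimage, hDdef, Set.mem_setOf_eq, hLdef, hFdef]
      have hDs : MeasurableSet {p : ℝ × ℝ |
          sInf {z : ℝ | Function.leftLim (condCDF ρ s) p.1
            + p.2 * (condCDF ρ s p.1 - Function.leftLim (condCDF ρ s) p.1)
              ≤ condCDF ρ s z} ≠ p.1} := by
        have hq : Measurable fun p : ℝ × ℝ => g₀ (s,
            Function.leftLim (condCDF ρ s) p.1
              + p.2 * (condCDF ρ s p.1 - Function.leftLim (condCDF ρ s) p.1)) := by
          refine hg₀.comp (measurable_const.prodMk ?_)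
          have h1 : Measurable fun p : ℝ × ℝ => Function.leftLim (condCDF ρ s) p.1 :=
            (leftLim_mono (condCDF ρ s)).measurable.comp measurable_fst
          have h2 : Measurable fun p : ℝ × ℝ => condCDF ρ s p.1 :=
            (condCDF ρ s).mono.measurable.comp measurable_fst
          exact h1.add (measurable_snd.mul (h2.sub h1))
        exact (measurableSet_eq_fun hq measurable_fst).compl
      calc ∫⁻ y, unif (Prod.mk (s, y) ⁻¹' D) ∂(condCDF ρ s).measure
          = ((condCDF ρ s).measure.prod unif) {p : ℝ × ℝ |
              sInf {z : ℝ | Function.leftLim (condCDF ρ s) p.1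
                + p.2 * (condCDF ρ s p.1 - Function.leftLim (condCDF ρ s) p.1)
                  ≤ condCDF ρ s z} ≠ p.1} := by
            rw [Measure.prod_apply hDs]
            exact lintegral_congr fun y => by rw [hsl y]; rfl
        _ = 0 := transform_recovery (tendsto_condCDF_atBot ρ s)
    simp only [hz, lintegral_zero]
  -- definition of the final objects
  set q' : DS × ℝ → ℝ := fun p => φ (r (g₀ p)) with hq'def
  have hq' : Measurable q' := hφ.measurable.comp (hr.comp hg₀)
  set U : Ω → ℝ := fun ω =>
    if Y ω = q' (S ω, U₀ ω) ∧ 0 ≤ U₀ ω then U₀ ω else -Real.exp (Y ω) with hUdef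
  have hgoodm : MeasurableSet {ω | Y ω = q' (S ω, U₀ ω) ∧ 0 ≤ U₀ ω} :=
    (measurableSet_eq_fun hY (hq'.comp (hS.prodMk hU₀))).inter
      (measurableSet_le measurable_const hU₀)
  have hU : Measurable U :=
    Measurable.ite hgoodm hU₀ (Real.measurable_exp.comp hY).neg
  have hUae : U =ᵐ[P] U₀ := by
    have h1 : ∀ᵐ ω ∂P, 0 ≤ U₀ ω := by
      have hnull : P (U₀ ⁻¹' Set.Iio 0) = 0 := by
        rw [← Measure.map_apply hU₀ measurableSet_Iio, hU₀law]
        rw [unif_apply measurableSet_Iio]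
        have : Set.Iio (0:ℝ) ∩ Set.Icc (0:ℝ) 1 = ∅ := by
          rw [Set.eq_empty_iff_forall_notMem]
          rintro v ⟨hv1, hv2, _⟩
          exact absurd hv2 (not_le.mpr hv1)
        rw [this, measure_empty]
      rw [ae_iff]
      convert hnull using 2
      ext ω
      simp [not_le]
    have h2 : ∀ᵐ ω ∂P, Y ω = q' (S ω, U₀ ω) := by
      filter_upwards [hrec] with ω h
      rw [hq'def]
      simp only
      rw [h, hYdef]
      simp only
      rw [hrφ]
    filter_upwards [h1, h2] with ω h1 h2
    rw [hUdef]
    simp only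
    rw [if_pos ⟨h2, h1⟩]
  set fd : DS × ℝ → DX := fun p =>
    if p.2 < 0 then r (Real.log (-p.2)) else r (g₀ p) with hfddef
  have hfd : Measurable fd :=
    Measurable.ite (measurableSet_lt measurable_snd measurable_const)
      (hr.comp (Real.measurable_log.comp measurable_snd.neg)) (hr.comp hg₀)
  set hd : DX × DS × ℝ → ℝ := fun x =>
    if φ x.1 = q' (x.2.1, L (x.2.1, φ x.1) + x.2.2 * (F (x.2.1, φ x.1) - L (x.2.1, φ x.1)))
        ∧ 0 ≤ L (x.2.1, φ x.1) + x.2.2 * (F (x.2.1, φ x.1) - L (x.2.1, φ x.1))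
    then L (x.2.1, φ x.1) + x.2.2 * (F (x.2.1, φ x.1) - L (x.2.1, φ x.1))
    else -Real.exp (φ x.1) with hhddef
  have hhd : Measurable hd := by
    have ha : Measurable fun x : DX × DS × ℝ => φ x.1 := hφ.measurable.comp measurable_fst
    have hs' : Measurable fun x : DX × DS × ℝ => x.2.1 := measurable_fst.comp measurable_snd
    have hv' : Measurable fun x : DX × DS × ℝ => x.2.2 := measurable_snd.comp measurable_snd
    have hL' : Measurable fun x : DX × DS × ℝ => L (x.2.1, φ x.1) :=
      hLm.comp (hs'.prodMk ha)
    have hF' : Measurable fun x : DX × DS × ℝ => F (x.2.1, φ x.1) :=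
      hFm.comp (hs'.prodMk ha)
    have hu' : Measurable fun x : DX × DS × ℝ =>
        L (x.2.1, φ x.1) + x.2.2 * (F (x.2.1, φ x.1) - L (x.2.1, φ x.1)) :=
      hL'.add (hv'.mul (hF'.sub hL'))
    refine Measurable.ite ?_ hu' (Real.measurable_exp.comp ha).neg
    exact (measurableSet_eq_fun ha (hq'.comp (hs'.prodMk hu'))).inter
      (measurableSet_le measurable_const hu')
  refine ⟨fd, U, hd, hfd, hhd, ?_, ?_, ?_, ?_⟩
  · rw [Measure.map_congr hUae]
    exact hU₀law
  · exact hindepU₀S.congr hUae.symm (Filter.EventuallyEq.refl _ S)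
  · intro ω
    by_cases hg : Y ω = q' (S ω, U₀ ω) ∧ 0 ≤ U₀ ω
    · have hUω : U ω = U₀ ω := if_pos hg
      have hnn : ¬ U ω < 0 := by rw [hUω]; exact not_lt.mpr hg.2
      have : fd (S ω, U ω) = r (g₀ (S ω, U ω)) := if_neg hnn
      rw [this, hUω]
      apply hφ.injective
      have := hg.1
      rw [hq'def] at this
      simp only at this
      rw [← this]
    · have hUω : U ω = -Real.exp (Y ω) := if_neg hg
      have hneg : U ω < 0 := by
        rw [hUω]
        simp [Real.exp_pos]
      have : fd (S ω, U ω) = r (Real.log (-U ω)) := if_pos hneg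
      rw [this, hUω, neg_neg, Real.log_exp, hYdef]
      simp only
      rw [hrφ]
  · intro ω
    rfl
end

section
/- (Scaled membership under independent weighting) Let $W$ be a random element of $\mathcal{W}$ with the same distribution as a reference element, let $X\ge 0$ be a nonnegative random variable independent of $W$ with finite mean, let $g:\mathcal{W}\times\mathcal{A}\to\mathbb{R}^m$ be bounded measurable, let $\Gamma=\{\mathbb{E}[g(W,\alpha(W,U))]:\alpha\text{ measurable},\ U\sim\mathrm{Unif}[0,1]\text{ independent of }W\}$ (a bounded convex set), and let $A$ be any random element of $\mathcal{A}$ (possibly dependent on $(W,X)$), where $\mathcal{A}$ is a standard Borel space. Then $\mathbb{E}[X\, g(W,A)]\in \mathbb{E}[X]\,\overline{\Gamma}$, where $\mathbb{E}[X]\Gamma$ denotes Minkowski scaling. -/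
open MeasureTheory ProbabilityTheory Pointwise
open scoped NNReal ENNReal

private lemma integrable_of_bdd19 {δ : Type*} [MeasurableSpace δ] {μ : Measure δ}
    [IsFiniteMeasure μ] {E : Type*} [NormedAddCommGroup E] {h : δ → E} {C : ℝ}
    (hm : AEStronglyMeasurable h μ) (hb : ∀ x, ‖h x‖ ≤ C) : Integrable h μ :=
  Integrable.mono' (integrable_const C) hm (Filter.Eventually.of_forall hb)

open Set Filter Topology in
private lemma quantile_le_iff19 (μ : Measure ℝ) [IsProbabilityMeasure μ] {u t : ℝ}
    (hu0 : 0 < u) (hu1 : u < 1) :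
    sInf {x | u ≤ cdf μ x} ≤ t ↔ u ≤ cdf μ t := by
  have hne : {x | u ≤ cdf μ x}.Nonempty := by
    obtain ⟨x, hx⟩ := ((tendsto_cdf_atTop μ).eventually (eventually_gt_nhds hu1)).exists
    exact ⟨x, hx.le⟩
  have hbdd : BddBelow {x | u ≤ cdf μ x} := by
    obtain ⟨y₀, hy₀⟩ := (Filter.eventually_atBot).mp
      ((tendsto_cdf_atBot μ).eventually (eventually_lt_nhds hu0))
    exact ⟨y₀, fun s hs => le_of_not_gt fun hlt => absurd hs (not_le.mpr (hy₀ s hlt.le))⟩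
  constructor
  · intro h
    have hev : ∀ s ∈ Ioi t, u ≤ cdf μ s := by
      intro s hs
      obtain ⟨x, hx, hxs⟩ := exists_lt_of_csInf_lt hne (lt_of_le_of_lt h hs)
      exact hx.trans (monotone_cdf μ hxs.le)
    have htd : Tendsto (cdf μ) (nhdsWithin t (Ioi t)) (nhds (cdf μ t)) :=
      ((cdf μ).right_continuous t).tendsto.mono_left (nhdsWithin_mono t Ioi_subset_Ici_self)
    exact ge_of_tendsto htd (eventually_nhdsWithin_of_forall hev)
  · intro h
    exact csInf_le hbdd h

open Set in
private lemma exists_sampler_real19 {𝒲 : Type*} [MeasurableSpace 𝒲] (μ : 𝒲 → Measure ℝ)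
    (hprob : ∀ w, IsProbabilityMeasure (μ w))
    (hmeas : ∀ x : ℝ, Measurable (fun w => μ w (Set.Iic x))) :
    ∃ G : 𝒲 → ℝ → ℝ, Measurable (Function.uncurry G) ∧
      ∀ w, (volume.restrict (Set.Icc (0:ℝ) 1)).map (G w) = μ w := by
  classical
  haveI := hprob
  set F : 𝒲 → ℝ → ℝ := fun w x => cdf (μ w) x with hF
  set G : 𝒲 → ℝ → ℝ := fun w u => if u ∈ Set.Ioo (0:ℝ) 1 then sInf {x | u ≤ F w x} else 0
    with hG
  have hFmeas : ∀ t : ℝ, Measurable fun w => F w t := by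
    intro t
    have h : (fun w => F w t) = fun w => (μ w (Set.Iic t)).toReal := by
      funext w; exact cdf_eq_real _ _
    rw [h]; exact (hmeas t).ennreal_toReal
  have hkey : ∀ (w : 𝒲) (u : ℝ), u ∈ Set.Ioo (0:ℝ) 1 → ∀ t, (G w u ≤ t ↔ u ≤ F w t) := by
    intro w u hu t
    rw [hG]; simp only [if_pos hu]
    exact quantile_le_iff19 (μ w) hu.1 hu.2
  have hGmeas : Measurable (Function.uncurry G) := by
    apply measurable_of_Iic
    intro t
    have h : Function.uncurry G ⁻¹' Set.Iic t =
        ({p : 𝒲 × ℝ | p.2 ∈ Set.Ioo (0:ℝ) 1} ∩ {p : 𝒲 × ℝ | p.2 ≤ F p.1 t}) ∪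
        ({p : 𝒲 × ℝ | p.2 ∈ Set.Ioo (0:ℝ) 1}ᶜ ∩ (if (0:ℝ) ≤ t then Set.univ else ∅)) := by
      ext ⟨w, u⟩
      simp only [Set.mem_preimage, Function.uncurry_apply_pair, Set.mem_union,
        Set.mem_inter_iff, Set.mem_setOf_eq, Set.mem_compl_iff, Set.mem_Iic]
      constructor
      · intro hle
        by_cases hu : u ∈ Set.Ioo (0:ℝ) 1
        · exact Or.inl ⟨hu, (hkey w u hu t).mp hle⟩
        · refine Or.inr ⟨hu, ?_⟩
          have hG0 : G w u = 0 := by rw [hG]; simp only [if_neg hu]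
          rw [hG0] at hle
          rw [if_pos hle]; trivial
      · intro h
        rcases h with ⟨hu, hle⟩ | ⟨hu, hmem⟩
        · exact (hkey w u hu t).mpr hle
        · have hG0 : G w u = 0 := by rw [hG]; simp only [if_neg hu]
          split_ifs at hmem with h0
          · rw [hG0]; exact h0
          · exact absurd hmem (Set.notMem_empty _)
    rw [h]
    refine MeasurableSet.union ?_ ?_
    · exact (measurable_snd measurableSet_Ioo).inter
        (measurableSet_le measurable_snd ((hFmeas t).comp measurable_fst))
    · refine ((measurable_snd measurableSet_Ioo).compl).inter ?_
      split_ifs <;> simp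
  refine ⟨G, hGmeas, fun w => ?_⟩
  have hGw : Measurable (G w) := hGmeas.comp measurable_prodMk_left
  haveI : IsProbabilityMeasure (volume.restrict (Set.Icc (0:ℝ) 1)) :=
    ⟨by simp [Real.volume_Icc]⟩
  haveI : IsProbabilityMeasure ((volume.restrict (Set.Icc (0:ℝ) 1)).map (G w)) :=
    Measure.isProbabilityMeasure_map hGw.aemeasurable
  refine Measure.ext_of_Iic _ _ (fun t => ?_)
  rw [Measure.map_apply hGw measurableSet_Iic,
    Measure.restrict_congr_set Ioo_ae_eq_Icc.symm,
    Measure.restrict_apply (hGw measurableSet_Iic)]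
  have h0 : 0 ≤ F w t := cdf_nonneg _ _
  have h1 : F w t ≤ 1 := cdf_le_one _ _
  have hset : G w ⁻¹' Set.Iic t ∩ Set.Ioo 0 1 = Set.Ioo (0:ℝ) 1 ∩ Set.Iic (F w t) := by
    ext u
    simp only [Set.mem_inter_iff, Set.mem_preimage, Set.mem_Iic]
    constructor
    · rintro ⟨hle, hu⟩; exact ⟨hu, (hkey w u hu t).mp hle⟩
    · rintro ⟨hu, hle⟩; exact ⟨(hkey w u hu t).mpr hle, hu⟩
  rw [hset, ← ofReal_cdf (μ w) t]
  rcases lt_or_eq_of_le h1 with h1' | h1'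
  · have : Set.Ioo (0:ℝ) 1 ∩ Set.Iic (F w t) = Set.Ioc 0 (F w t) := by
      ext u
      simp only [Set.mem_inter_iff, Set.mem_Ioo, Set.mem_Iic, Set.mem_Ioc]
      exact ⟨fun ⟨⟨a, _⟩, b⟩ => ⟨a, b⟩, fun ⟨a, b⟩ => ⟨⟨a, lt_of_le_of_lt b h1'⟩, b⟩⟩
    rw [this, Real.volume_Ioc, sub_zero]
  · have : Set.Ioo (0:ℝ) 1 ∩ Set.Iic (F w t) = Set.Ioo 0 1 := by
      rw [Set.inter_eq_left]
      intro u hu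
      exact le_of_lt (h1' ▸ hu.2)
    rw [this, Real.volume_Ioo, sub_zero, ← h1']

private lemma exists_sampler19 {𝒲 𝒜 : Type*} [MeasurableSpace 𝒲] [MeasurableSpace 𝒜]
    [StandardBorelSpace 𝒜] [Nonempty 𝒜] (κ : 𝒲 → Measure 𝒜)
    (hprob : ∀ w, IsProbabilityMeasure (κ w))
    (hmeas : ∀ s : Set 𝒜, MeasurableSet s → Measurable (fun w => κ w s)) :
    ∃ α : 𝒲 → ℝ → 𝒜, Measurable (Function.uncurry α) ∧
      ∀ w, (volume.restrict (Set.Icc (0:ℝ) 1)).map (α w) = κ w := by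
  classical
  obtain ⟨f, hf⟩ := MeasureTheory.exists_measurableEmbedding_real 𝒜
  haveI := hprob
  obtain ⟨G, hGmeas, hGdist⟩ := exists_sampler_real19 (fun w => (κ w).map f)
    (fun w => Measure.isProbabilityMeasure_map hf.measurable.aemeasurable)
    (fun x => by
      simp only [Measure.map_apply hf.measurable measurableSet_Iic]
      exact hmeas _ (hf.measurable measurableSet_Iic))
  obtain ⟨a₀⟩ := ‹Nonempty 𝒜›
  set G₂ : 𝒲 → ℝ → ℝ := fun w u => if G w u ∈ Set.range f then G w u else f a₀ with hG₂
  have hG₂meas : Measurable (Function.uncurry G₂) := by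
    have : Function.uncurry G₂ =
        fun p => if Function.uncurry G p ∈ Set.range f then Function.uncurry G p else f a₀ :=
      rfl
    rw [this]
    exact Measurable.ite (hGmeas hf.measurableSet_range) hGmeas measurable_const
  have hrange : ∀ w u, G₂ w u ∈ Set.range f := by
    intro w u; rw [hG₂]; dsimp only
    split_ifs with h
    · exact h
    · exact ⟨a₀, rfl⟩
  set α : 𝒲 → ℝ → 𝒜 := fun w u => Function.invFun f (G₂ w u) with hα
  have hfα : ∀ w u, f (α w u) = G₂ w u := fun w u => Function.invFun_eq (hrange w u)
  have hαmeas : Measurable (Function.uncurry α) := by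
    rw [← hf.measurable_comp_iff]
    have : f ∘ Function.uncurry α = Function.uncurry G₂ := by
      funext p; exact hfα p.1 p.2
    rw [this]; exact hG₂meas
  refine ⟨α, hαmeas, fun w => ?_⟩
  have hαw : Measurable (α w) := hαmeas.comp measurable_prodMk_left
  have hG₂w : Measurable (G₂ w) := hG₂meas.comp measurable_prodMk_left
  have hGw : Measurable (G w) := hGmeas.comp measurable_prodMk_left
  set ν := volume.restrict (Set.Icc (0:ℝ) 1) with hν
  have hae : G w =ᵐ[ν] G₂ w := by
    have h0 : (ν.map (G w)) (Set.range f)ᶜ = 0 := by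
      rw [hGdist w, Measure.map_apply hf.measurable hf.measurableSet_range.compl]
      have : f ⁻¹' (Set.range f)ᶜ = ∅ := by
        ext a; simp [Set.mem_range]
      rw [this, measure_empty]
    rw [Measure.map_apply hGw hf.measurableSet_range.compl] at h0
    have hmem : ∀ᵐ u ∂ν, G w u ∈ Set.range f := by
      rw [ae_iff]; exact h0
    filter_upwards [hmem] with u hu
    rw [hG₂]; dsimp only; rw [if_pos hu]
  refine Measure.ext (fun s hs => ?_)
  rw [Measure.map_apply hαw hs]
  have hpre : α w ⁻¹' s = G₂ w ⁻¹' (f '' s) := by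
    ext u
    simp only [Set.mem_preimage]
    constructor
    · intro h; exact ⟨α w u, h, hfα w u⟩
    · rintro ⟨a, ha, hfa⟩
      have heq : f a = f (α w u) := by rw [hfα w u, hfa]
      rwa [← hf.injective heq]
  rw [hpre, ← Measure.map_apply hG₂w (hf.measurableSet_image.mpr hs),
    ← Measure.map_congr hae, hGdist w,
    Measure.map_apply hf.measurable (hf.measurableSet_image.mpr hs),
    Set.preimage_image_eq s hf.injective]

/-- Scaled membership under independent weighting:
`E[X g(W,A)] ∈ E[X] · closure Γ`, where `Γ` is the achievable set of
expectations `E[g(W, α(W,U))]` over measurable policies with `U` uniform and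
independent of `W`. -/
theorem stmt19 {Ω 𝒲 𝒜 : Type*} [MeasurableSpace Ω] [MeasurableSpace 𝒲]
    [MeasurableSpace 𝒜] [StandardBorelSpace 𝒜]
    (P : Measure Ω) [IsProbabilityMeasure P]
    (W : Ω → 𝒲) (hW : Measurable W)
    (X : Ω → ℝ) (hX : Measurable X) (hX0 : ∀ ω, 0 ≤ X ω) (hXint : Integrable X P)
    (hindep : IndepFun X W P)
    (m : ℕ) (g : 𝒲 → 𝒜 → EuclideanSpace ℝ (Fin m))
    (hg : Measurable (Function.uncurry g)) (Cb : ℝ) (hgb : ∀ w a, ‖g w a‖ ≤ Cb)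
    (A : Ω → 𝒜) (hA : Measurable A)
    (V : Ω → ℝ) (hV : Measurable V)
    (hVunif : Measure.map V P = volume.restrict (Set.Icc (0 : ℝ) 1))
    (hVindep : IndepFun (fun ω => (W ω, X ω, A ω)) V P) :
    let Γ : Set (EuclideanSpace ℝ (Fin m)) :=
      {x | ∃ (α : 𝒲 → ℝ → 𝒜) (U : Ω → ℝ),
        Measurable (Function.uncurry α) ∧ Measurable U ∧
        Measure.map U P = volume.restrict (Set.Icc (0 : ℝ) 1) ∧
        IndepFun U W P ∧
        x = ∫ ω, g (W ω) (α (W ω) (U ω)) ∂P}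
    (∫ ω, X ω • g (W ω) (A ω) ∂P) ∈ (∫ ω, X ω ∂P) • closure Γ := by
  intro Γ
  classical
  have hΩ : Nonempty Ω := by
    rcases isEmpty_or_nonempty Ω with h | h
    · exact absurd (measure_univ (μ := P)) (by simp [Set.univ_eq_empty_iff.mpr h])
    · exact h
  obtain ⟨ω₀⟩ := hΩ
  haveI : Nonempty 𝒜 := ⟨A ω₀⟩
  haveI hνprob : IsProbabilityMeasure (volume.restrict (Set.Icc (0:ℝ) 1)) :=
    ⟨by simp [Real.volume_Icc]⟩
  have hWV : IndepFun W V P := hVindep.comp measurable_fst measurable_id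
  by_cases hc : ∫ ω, X ω ∂P = 0
  · have hX0' : X =ᵐ[P] 0 := by
      rwa [integral_eq_zero_iff_of_nonneg hX0 hXint] at hc
    have h1 : (fun ω => X ω • g (W ω) (A ω)) =ᵐ[P] (fun _ => 0) :=
      hX0'.mono fun ω h => by simp only [Pi.zero_apply] at h; simp [h]
    rw [integral_congr_ae h1, integral_zero, hc]
    have hΓne : Γ.Nonempty :=
      ⟨∫ ω, g (W ω) (A ω₀) ∂P,
        ⟨fun _ _ => A ω₀, V, measurable_const, hV, hVunif, hWV.symm, rfl⟩⟩
    rw [Set.zero_smul_set (hΓne.mono subset_closure)]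
    exact Set.zero_mem_zero
  · have hcpos : (0:ℝ) < ∫ ω, X ω ∂P := (integral_nonneg hX0).lt_of_ne (Ne.symm hc)
    set c : ℝ := ∫ ω, X ω ∂P with hcdef
    set d : Ω → ℝ≥0 := fun ω => Real.toNNReal (X ω / c) with hd
    have hdmeas : Measurable d := (hX.div_const c).real_toNNReal
    set Q : Measure Ω := P.withDensity (fun ω => (d ω : ℝ≥0∞)) with hQdef
    have hXc : Integrable (fun ω => X ω / c) P := hXint.div_const c
    have hXc0 : ∀ ω, 0 ≤ X ω / c := fun ω => div_nonneg (hX0 ω) hcpos.le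
    have hcoe : ∀ ω, ((d ω : ℝ≥0∞)) = ENNReal.ofReal (X ω / c) := fun ω => rfl
    haveI hQprob : IsProbabilityMeasure Q := by
      constructor
      rw [hQdef, withDensity_apply _ MeasurableSet.univ, Measure.restrict_univ]
      simp only [hcoe]
      rw [← ofReal_integral_eq_lintegral_ofReal hXc (Filter.Eventually.of_forall hXc0)]
      rw [integral_div, ← hcdef, div_self hc, ENNReal.ofReal_one]
    -- marginal of W under Q
    have hQW : Q.map W = P.map W := by
      ext s hs
      rw [Measure.map_apply hW hs, Measure.map_apply hW hs, hQdef,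
        withDensity_apply _ (hW hs)]
      simp only [hcoe]
      rw [← ofReal_integral_eq_lintegral_ofReal hXc.restrict
        (Filter.Eventually.of_forall hXc0)]
      have hind : ∫ ω in W ⁻¹' s, X ω / c ∂P = (P (W ⁻¹' s)).toReal := by
        have hIndep : IndepFun (fun ω => X ω / c)
            (fun ω => Set.indicator s (fun _ => (1:ℝ)) (W ω)) P :=
          hindep.comp (measurable_id.div_const c) (measurable_const.indicator hs)
        have h1 : ∫ ω in W ⁻¹' s, X ω / c ∂P
            = ∫ ω, ((fun ω => X ω / c) * (fun ω => Set.indicator s (fun _ => (1:ℝ)) (W ω))) ω ∂P := by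
          rw [← integral_indicator (hW hs)]
          congr 1
          funext ω
          by_cases hω : W ω ∈ s <;> simp [Set.indicator, hω]
        rw [h1]
        rw [hIndep.integral_mul_eq_mul_integral ((hX.div_const c).aestronglyMeasurable)
          (((measurable_const.indicator hs).comp hW).aestronglyMeasurable)]
        have h2 : ∫ ω, X ω / c ∂P = 1 := by rw [integral_div, ← hcdef, div_self hc]
        have h3 : ∫ ω, Set.indicator s (fun _ => (1:ℝ)) (W ω) ∂P = (P (W ⁻¹' s)).toReal := by
          have : (fun ω => Set.indicator s (fun _ => (1:ℝ)) (W ω))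
              = Set.indicator (W ⁻¹' s) (fun _ => (1:ℝ)) := by
            funext ω
            by_cases hω : W ω ∈ s <;> simp [Set.indicator, hω]
          rw [this, integral_indicator_const (1:ℝ) (hW hs), smul_eq_mul, mul_one]
          rfl
        rw [h2, h3, one_mul]
      rw [hind, ENNReal.ofReal_toReal (measure_ne_top P _)]
    -- joint law under Q
    have hWA : Measurable fun ω => (W ω, A ω) := hW.prodMk hA
    set ρ : Measure (𝒲 × 𝒜) := Q.map (fun ω => (W ω, A ω)) with hρdef
    haveI : IsProbabilityMeasure ρ := Measure.isProbabilityMeasure_map hWA.aemeasurable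
    have hfst : ρ.fst = P.map W := by
      rw [hρdef, Measure.fst_map_prodMk hA, hQW]
    obtain ⟨α, hα, hαdist⟩ := exists_sampler19 (fun w => ρ.condKernel w)
      (fun w => inferInstance) (fun s hs => Kernel.measurable_coe _ hs)
    set ν : Measure ℝ := volume.restrict (Set.Icc (0:ℝ) 1) with hν
    haveI : IsProbabilityMeasure (P.map W) := Measure.isProbabilityMeasure_map hW.aemeasurable
    set R : EuclideanSpace ℝ (Fin m) := ∫ ω, g (W ω) (α (W ω) (V ω)) ∂P with hR
    have hRmem : R ∈ Γ := ⟨α, V, hα, hV, hVunif, hWV.symm, rfl⟩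
    -- the chain of equalities
    have hgp : Measurable fun p : 𝒲 × ℝ => g p.1 (α p.1 p.2) :=
      hg.comp (measurable_fst.prodMk hα)
    have hmapWV : P.map (fun ω => (W ω, V ω)) = (P.map W).prod ν := by
      rw [(indepFun_iff_map_prod_eq_prod_map_map hW.aemeasurable hV.aemeasurable).mp hWV,
        hVunif]
    have stepB : R = ∫ p, g p.1 (α p.1 p.2) ∂((P.map W).prod ν) := by
      rw [hR, ← hmapWV, integral_map (hW.prodMk hV).aemeasurable hgp.aestronglyMeasurable]
    have stepC : ∫ p, g p.1 (α p.1 p.2) ∂((P.map W).prod ν)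
        = ∫ w, ∫ u, g w (α w u) ∂ν ∂(P.map W) :=
      integral_prod _ (integrable_of_bdd19 hgp.aestronglyMeasurable
        (fun p => hgb p.1 (α p.1 p.2)))
    have stepD : ∀ w, ∫ u, g w (α w u) ∂ν = ∫ a, g w a ∂(ρ.condKernel w) := by
      intro w
      rw [← hαdist w]
      have hgw : Measurable fun a : 𝒜 => g w a := hg.comp measurable_prodMk_left
      have hαw : AEMeasurable (α w) ν := (hα.comp measurable_prodMk_left).aemeasurable
      exact (integral_map hαw hgw.aestronglyMeasurable).symm
    have hgρ : Integrable (fun p : 𝒲 × 𝒜 => g p.1 p.2) ρ :=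
      integrable_of_bdd19 (hg.comp (measurable_fst.prodMk measurable_snd)).aestronglyMeasurable
        (fun p => hgb p.1 p.2)
    have stepE : ∫ w, ∫ a, g w a ∂(ρ.condKernel w) ∂(P.map W)
        = ∫ p : 𝒲 × 𝒜, g p.1 p.2 ∂ρ := by
      rw [← hfst]
      have hdis : ρ.fst ⊗ₘ ρ.condKernel = ρ := ρ.disintegrate ρ.condKernel
      have hgρ' : Integrable (fun p : 𝒲 × 𝒜 => g p.1 p.2) (ρ.fst ⊗ₘ ρ.condKernel) := by
        rw [hdis]; exact hgρ
      calc ∫ w, ∫ a, g w a ∂(ρ.condKernel w) ∂ρ.fst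
          = ∫ p : 𝒲 × 𝒜, g p.1 p.2 ∂(ρ.fst ⊗ₘ ρ.condKernel) :=
            (Measure.integral_compProd hgρ').symm
        _ = ∫ p : 𝒲 × 𝒜, g p.1 p.2 ∂ρ := by rw [hdis]
    have stepF : ∫ p : 𝒲 × 𝒜, g p.1 p.2 ∂ρ = ∫ ω, g (W ω) (A ω) ∂Q := by
      have hgunc : Measurable fun p : 𝒲 × 𝒜 => g p.1 p.2 :=
        hg.comp (measurable_fst.prodMk measurable_snd)
      rw [hρdef]
      exact integral_map hWA.aemeasurable hgunc.aestronglyMeasurable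
    have stepG : ∫ ω, g (W ω) (A ω) ∂Q = ∫ ω, (X ω / c) • g (W ω) (A ω) ∂P := by
      rw [hQdef, integral_withDensity_eq_integral_smul hdmeas]
      congr 1
      funext ω
      rw [hd]
      dsimp only
      rw [NNReal.smul_def, Real.coe_toNNReal _ (hXc0 ω)]
    have key : ∫ ω, X ω • g (W ω) (A ω) ∂P = c • R := by
      rw [stepB, stepC]
      simp_rw [stepD]
      rw [stepE, stepF, stepG, ← integral_smul]
      congr 1
      funext ω
      rw [smul_smul, mul_div_assoc', mul_comm, mul_div_assoc, div_self hc, mul_one]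
    rw [key]
    exact Set.smul_mem_smul_set (subset_closure hRmem)
end
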